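/- arXiv:2002.11955 — 7 statements merged into one kernel-verified Lean document; each statement's English description precedes it below -/
import Mathlib

section
/- Let Y, v_i, v_j, v_k be bounded real random variables on a common probability space with Y^2 = 1 almost surely. Suppose the pairs (v_i*Y, v_j*Y), (v_i*Y, v_k*Y), and (v_j*Y, v_k*Y) are each independent. Then E[v_i * v_j] = E[v_i*Y] * E[v_j*Y], E[v_i * v_k] = E[v_i*Y] * E[v_k*Y], and E[v_j * v_k] = E[v_j*Y] * E[v_k*Y]; consequently, if E[v_j * v_k] ≠ 0, then E[v_i*Y]^2 = E[v_i*v_j] * E[v_i*v_k] / E[v_j*v_k]. -/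
open MeasureTheory ProbabilityTheory

/-- Correctness of the triplet method: if `Y² = 1` a.s. and the pairs
`(vᵢY, vⱼY)`, `(vᵢY, vₖY)`, `(vⱼY, vₖY)` are each independent, then the pairwise
product expectations factor as products of accuracies, and consequently the squared
accuracy `E[vᵢY]²` is recoverable in closed form from observable quantities. -/
theorem triplet_method_correct {Ω : Type*} [MeasureSpace Ω]
    [IsProbabilityMeasure (ℙ : Measure Ω)]
    (Y vi vj vk : Ω → ℝ)
    (hY : Measurable Y) (hvi : Measurable vi) (hvj : Measurable vj) (hvk : Measurable vk)
    (hYb : ∃ C : ℝ, ∀ ω, |Y ω| ≤ C) (hvib : ∃ C : ℝ, ∀ ω, |vi ω| ≤ C)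
    (hvjb : ∃ C : ℝ, ∀ ω, |vj ω| ≤ C) (hvkb : ∃ C : ℝ, ∀ ω, |vk ω| ≤ C)
    (hYsq : ∀ᵐ ω ∂(ℙ : Measure Ω), (Y ω) ^ 2 = 1)
    (hij : IndepFun (fun ω => vi ω * Y ω) (fun ω => vj ω * Y ω) ℙ)
    (hik : IndepFun (fun ω => vi ω * Y ω) (fun ω => vk ω * Y ω) ℙ)
    (hjk : IndepFun (fun ω => vj ω * Y ω) (fun ω => vk ω * Y ω) ℙ) :
    (∫ ω, vi ω * vj ω) = (∫ ω, vi ω * Y ω) * (∫ ω, vj ω * Y ω) ∧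
    (∫ ω, vi ω * vk ω) = (∫ ω, vi ω * Y ω) * (∫ ω, vk ω * Y ω) ∧
    (∫ ω, vj ω * vk ω) = (∫ ω, vj ω * Y ω) * (∫ ω, vk ω * Y ω) ∧
    ((∫ ω, vj ω * vk ω) ≠ 0 →
      (∫ ω, vi ω * Y ω) ^ 2 =
        (∫ ω, vi ω * vj ω) * (∫ ω, vi ω * vk ω) / (∫ ω, vj ω * vk ω)) := by
  have key : ∀ u v : Ω → ℝ, (∫ ω, u ω * v ω) =
      ∫ ω, (u ω * Y ω) * (v ω * Y ω) := by
    intro u v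
    refine integral_congr_ae ?_
    filter_upwards [hYsq] with ω h
    calc u ω * v ω = u ω * v ω * Y ω ^ 2 := by rw [h]; ring
    _ = (u ω * Y ω) * (v ω * Y ω) := by ring
  have h1 : (∫ ω, vi ω * vj ω) = (∫ ω, vi ω * Y ω) * (∫ ω, vj ω * Y ω) := by
    rw [key vi vj]
    exact hij.integral_fun_mul_eq_mul_integral (hvi.mul hY).aestronglyMeasurable (hvj.mul hY).aestronglyMeasurable
  have h2 : (∫ ω, vi ω * vk ω) = (∫ ω, vi ω * Y ω) * (∫ ω, vk ω * Y ω) := by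
    rw [key vi vk]
    exact hik.integral_fun_mul_eq_mul_integral (hvi.mul hY).aestronglyMeasurable (hvk.mul hY).aestronglyMeasurable
  have h3 : (∫ ω, vj ω * vk ω) = (∫ ω, vj ω * Y ω) * (∫ ω, vk ω * Y ω) := by
    rw [key vj vk]
    exact hjk.integral_fun_mul_eq_mul_integral (hvj.mul hY).aestronglyMeasurable (hvk.mul hY).aestronglyMeasurable
  refine ⟨h1, h2, h3, fun hne => ?_⟩
  have hj : (∫ ω, vj ω * Y ω) ≠ 0 := fun h => hne (by rw [h3, h, zero_mul])
  have hk : (∫ ω, vk ω * Y ω) ≠ 0 := fun h => hne (by rw [h3, h, mul_zero])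
  rw [h1, h2, h3]
  field_simp
end

section
/- Define 2·3^s × 2·3^s real matrices A_s, B_s recursively by A_0 = [[1,1],[1,0]], B_0 = [[0,0],[0,1]], and A_s = D ⊗ A_{s−1} + E ⊗ B_{s−1}, B_s = E ⊗ A_{s−1} + D ⊗ B_{s−1}, where D = [[1,1,1],[1,0,0],[0,1,0]], E = [[0,0,0],[0,0,1],[0,0,0]], and ⊗ is the Kronecker product. Let Y, λ_1, …, λ_s be random variables with Y ∈ {−1,1} and each λ_i ∈ {−1,0,1}. Let μ ∈ ℝ^{2·3^s} be the vector of joint probabilities P(Y = ε, λ_1 = c_1, …, λ_s = c_s), indexed so that ε alternates through (1, −1) with period 2 (fastest), and c_i cycles through (1, 0, −1), changing every 2·3^{i−1} entries. Let r ∈ ℝ^{2·3^s} be indexed by assignments in which Y is tagged 'absent' or 'in Z' (alternating with period 2, in that order) and each λ_i is tagged 'absent', 'in Z', or 'in U' (changing every 2·3^{i−1} entries, in that order), with entry r(U, Z) = P( Π_{z ∈ Z} z = 1 and λ_j = 0 for all λ_j ∈ U ), where the product over an empty Z equals 1 (so in particular the first entry equals 1 when U is also empty). Likewise let r^B have entries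 r^B(U, Z) = P( Π_{z ∈ Z} z = −1 and λ_j = 0 for all λ_j ∈ U ) when Z ≠ ∅ and r^B(U, ∅) = 0, with the same indexing. Then A_s μ = r and B_s μ = r^B. -/
open Finset Matrix MeasureTheory ProbabilityTheory
open scoped Kronecker

/-- Index type for a clique of `s` sources and one task: `Idx s ≅ Fin (2·3^s)`,
identified row-major so that the `Fin 2` (task) component is the fastest-varying
(period 2) and the `Fin 3` component of the `i`-th source (1-based) changes every
`2·3^(i-1)` entries. -/
@[reducible]
def Idx : ℕ → Type
  | 0 => Fin 2
  | s + 1 => Fin 3 × Idx s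

instance fintypeIdx : ∀ s, Fintype (Idx s)
  | 0 => inferInstanceAs (Fintype (Fin 2))
  | s + 1 => letI := fintypeIdx s; inferInstanceAs (Fintype (Fin 3 × Idx s))

/-- The `Fin 2` component of an index (the tag of the task `Y`). -/
def eps : ∀ s, Idx s → Fin 2
  | 0, p => p
  | s + 1, p => eps s p.2

/-- The `Fin 3` component of an index belonging to the `i`-th source. -/
def tag : ∀ s, Idx s → Fin s → Fin 3
  | 0, _, i => i.elim0
  | s + 1, p, i => if h : (i : ℕ) < s then tag s p.2 ⟨i, h⟩ else p.1

/-- Value of a source tag in the `μ`-indexing: cycles through `(1, 0, -1)`. -/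
def cval : Fin 3 → ℝ := ![1, 0, -1]

/-- Value of the task tag in the `μ`-indexing: alternates through `(1, -1)`. -/
def yval : Fin 2 → ℝ := ![1, -1]

/-- `D = [[1,1,1],[1,0,0],[0,1,0]]`. -/
def Dm : Matrix (Fin 3) (Fin 3) ℝ := !![1, 1, 1; 1, 0, 0; 0, 1, 0]

/-- `E = [[0,0,0],[0,0,1],[0,0,0]]`. -/
def Em : Matrix (Fin 3) (Fin 3) ℝ := !![0, 0, 0; 0, 0, 1; 0, 0, 0]

/-- The pair `(A_s, B_s)` defined by `A_0 = [[1,1],[1,0]]`, `B_0 = [[0,0],[0,1]]`,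
`A_s = D ⊗ A_{s-1} + E ⊗ B_{s-1}`, and `B_s = E ⊗ A_{s-1} + D ⊗ B_{s-1}`, where
`⊗` is the Kronecker product. -/
noncomputable def ABmat : ∀ s, Matrix (Idx s) (Idx s) ℝ × Matrix (Idx s) (Idx s) ℝ
  | 0 => (!![1, 1; 1, 0], !![0, 0; 0, 1])
  | s + 1 => (Dm ⊗ₖ (ABmat s).1 + Em ⊗ₖ (ABmat s).2,
              Em ⊗ₖ (ABmat s).1 + Dm ⊗ₖ (ABmat s).2)
open scoped Classical

/-- Tag of a `castSucc` index. -/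
lemma tag_castSucc (s : ℕ) (c : Fin 3) (q : Idx s) (i : Fin s) :
    tag (s + 1) (c, q) i.castSucc = tag s q i := by
  simp only [tag, Fin.coe_castSucc, i.isLt, dif_pos, Fin.eta]

lemma tag_last (s : ℕ) (c : Fin 3) (q : Idx s) :
    tag (s + 1) (c, q) (Fin.last s) = c := by
  simp only [tag, Fin.val_last, lt_irrefl, dif_neg, not_false_iff]

lemma eps_succ (s : ℕ) (c : Fin 3) (q : Idx s) : eps (s + 1) (c, q) = eps s q := rfl

/-- Splitting a filtered product over `Fin (s+1)` tags. -/
lemma prod_tag_succ (s : ℕ) (c : Fin 3) (q : Idx s) (f : Fin (s + 1) → ℝ) :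
    (∏ i ∈ Finset.univ.filter (fun i => tag (s + 1) (c, q) i = 1), f i) =
      (∏ i ∈ Finset.univ.filter (fun i => tag s q i = 1), f i.castSucc) *
      (if c = 1 then f (Fin.last s) else 1) := by
  rw [Finset.prod_filter, Finset.prod_filter, Fin.prod_univ_castSucc]
  congr 1
  · exact Finset.prod_congr rfl fun i _ => by rw [tag_castSucc]
  · rw [tag_last]

/-- The conjunction condition for `r`. -/
def condA (s : ℕ) (p p' : Idx s) : Prop :=
  (if eps s p = 1 then yval (eps s p') else 1) *
    ∏ i ∈ Finset.univ.filter (fun i => tag s p i = 1), cval (tag s p' i) = 1 ∧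
  ∀ i, tag s p i = 2 → cval (tag s p' i) = 0

/-- The conjunction condition for `rB`. -/
def condB (s : ℕ) (p p' : Idx s) : Prop :=
  (eps s p = 1 ∨ ∃ i, tag s p i = 1) ∧
  ((if eps s p = 1 then yval (eps s p') else 1) *
    ∏ i ∈ Finset.univ.filter (fun i => tag s p i = 1), cval (tag s p' i) = -1 ∧
  ∀ i, tag s p i = 2 → cval (tag s p' i) = 0)

lemma v_eq_one (s : ℕ) (p p' : Idx s) (h : ¬(eps s p = 1 ∨ ∃ i, tag s p i = 1)) :
    (if eps s p = 1 then yval (eps s p') else 1) *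
      ∏ i ∈ Finset.univ.filter (fun i => tag s p i = 1), cval (tag s p' i) = 1 := by
  push_neg at h
  rw [if_neg h.1, Finset.filter_false_of_mem (fun i _ => h.2 i), Finset.prod_empty, one_mul]

lemma entry (s : ℕ) : ∀ p p' : Idx s,
    (ABmat s).1 p p' = (if condA s p p' then 1 else 0) ∧
    (ABmat s).2 p p' = (if condB s p p' then 1 else 0) := by
  induction s with
  | zero =>
    intro p p'
    fin_cases p <;> fin_cases p' <;>
      simp [ABmat, condA, condB, eps, yval, tag] <;> norm_num
  | succ s ih =>
    rintro ⟨c, q⟩ ⟨c', q'⟩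
    have ihA := (ih q q').1
    have ihB := (ih q q').2
    have hps := fun f => prod_tag_succ s c q f
    -- unfold matrices
    have hA : (ABmat (s + 1)).1 (c, q) (c', q') =
        Dm c c' * (if condA s q q' then 1 else 0) + Em c c' * (if condB s q q' then 1 else 0) := by
      simp [ABmat, Matrix.add_apply, Matrix.kroneckerMap_apply, ihA, ihB]
    have hB : (ABmat (s + 1)).2 (c, q) (c', q') =
        Em c c' * (if condA s q q' then 1 else 0) + Dm c c' * (if condB s q q' then 1 else 0) := by
      simp [ABmat, Matrix.add_apply, Matrix.kroneckerMap_apply, ihA, ihB]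
    -- abbreviations
    set v : ℝ := (if eps s q = 1 then yval (eps s q') else 1) *
      ∏ i ∈ Finset.univ.filter (fun i => tag s q i = 1), cval (tag s q' i) with hv
    have hZ : (∀ i : Fin (s+1), tag (s+1) (c, q) i = 2 → cval (tag (s+1) (c', q') i) = 0) ↔
        ((∀ i : Fin s, tag s q i = 2 → cval (tag s q' i) = 0) ∧ (c = 2 → cval c' = 0)) := by
      rw [Fin.forall_fin_succ']
      constructor
      · rintro ⟨h1, h2⟩
        exact ⟨fun i hi => by simpa [tag_castSucc] using h1 i (by rwa [tag_castSucc]),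
               fun hc => by simpa [tag_last] using h2 (by rwa [tag_last])⟩
      · rintro ⟨h1, h2⟩
        exact ⟨fun i hi => by rw [tag_castSucc]; exact h1 i (by rwa [tag_castSucc] at hi),
               fun hc => by rw [tag_last]; exact h2 (by rwa [tag_last] at hc)⟩
    have hprod : (∏ i ∈ Finset.univ.filter (fun i => tag (s+1) (c, q) i = 1),
        cval (tag (s+1) (c', q') i)) =
        (∏ i ∈ Finset.univ.filter (fun i => tag s q i = 1), cval (tag s q' i)) *
          (if c = 1 then cval c' else 1) := by
      rw [prod_tag_succ]
      congr 1
      · exact Finset.prod_congr rfl fun i _ => by rw [tag_castSucc]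
      · rw [tag_last]
    have hexists : (∃ i : Fin (s+1), tag (s+1) (c, q) i = 1) ↔
        ((∃ i : Fin s, tag s q i = 1) ∨ c = 1) := by
      rw [Fin.exists_fin_succ']
      constructor
      · rintro (⟨i, hi⟩ | h)
        · exact Or.inl ⟨i, by rwa [tag_castSucc] at hi⟩
        · exact Or.inr (by rwa [tag_last] at h)
      · rintro (⟨i, hi⟩ | h)
        · exact Or.inl ⟨i, by rwa [tag_castSucc]⟩
        · exact Or.inr (by rwa [tag_last])
    have hcondA : condA (s+1) (c, q) (c', q') ↔
        (v * (if c = 1 then cval c' else 1) = 1 ∧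
         (∀ i : Fin s, tag s q i = 2 → cval (tag s q' i) = 0) ∧ (c = 2 → cval c' = 0)) := by
      unfold condA
      rw [hprod, eps_succ s c q, eps_succ s c' q', hZ, ← mul_assoc, ← hv]
    have hcondB : condB (s+1) (c, q) (c', q') ↔
        ((eps s q = 1 ∨ (∃ i : Fin s, tag s q i = 1) ∨ c = 1) ∧
         (v * (if c = 1 then cval c' else 1) = -1 ∧
         ((∀ i : Fin s, tag s q i = 2 → cval (tag s q' i) = 0) ∧ (c = 2 → cval c' = 0)))) := by
      unfold condB
      rw [hprod, eps_succ s c q, eps_succ s c' q', hZ, ← mul_assoc, ← hv, hexists]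
    have hvone : ¬(eps s q = 1 ∨ ∃ i : Fin s, tag s q i = 1) → v = 1 := v_eq_one s q q'
    have hAiff : condA s q q' ↔ (v = 1 ∧ ∀ i : Fin s, tag s q i = 2 → cval (tag s q' i) = 0) := by
      unfold condA; rw [← hv]
    have hBiff : condB s q q' ↔ ((eps s q = 1 ∨ ∃ i : Fin s, tag s q i = 1) ∧ v = -1 ∧
        ∀ i : Fin s, tag s q i = 2 → cval (tag s q' i) = 0) := by
      unfold condB; rw [← hv]
    have hm1 : ∀ x : ℝ, x * -1 = 1 ↔ x = -1 := fun x => by constructor <;> intro h <;> linarith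
    have hm2 : ∀ x : ℝ, x * -1 = -1 ↔ x = 1 := fun x => by constructor <;> intro h <;> linarith
    have hNE : v = -1 → (eps s q = 1 ∨ ∃ i, tag s q i = 1) := fun h => by
      by_contra hc
      have h1 := v_eq_one s q q' hc
      rw [← hv] at h1
      rw [h1] at h
      norm_num at h
    have key2 : ∀ Zp : Prop, ((eps s q = 1 ∨ ∃ i, tag s q i = 1) ∧ v = -1 ∧ Zp) ↔ (v = -1 ∧ Zp) :=
      fun Zp => ⟨fun h => h.2, fun h => ⟨hNE h.1, h⟩⟩
    have key1 : ∀ Zp : Prop, ((eps s q = 1 ∨ ∃ i, tag s q i = 1) ∧ v = -1 ∧ Zp) ↔ (-v = 1 ∧ Zp) := by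
      intro Zp
      rw [key2 Zp]
      constructor
      · rintro ⟨h, hz⟩; exact ⟨by rw [h]; norm_num, hz⟩
      · rintro ⟨h, hz⟩; exact ⟨by linarith, hz⟩
    refine ⟨hA.trans ?_, hB.trans ?_⟩
    · simp only [hcondA, hAiff, hBiff]
      fin_cases c <;> fin_cases c' <;>
        simp [Dm, Em, cval] <;>
        first
          | rfl
          | (intros; rfl)
          | exact if_congr (key2 _) rfl rfl
          | exact if_congr (key1 _) rfl rfl
    · simp only [hcondB, hAiff, hBiff]
      fin_cases c <;> fin_cases c' <;>
        simp [Dm, Em, cval] <;>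
        first
          | rfl
          | (intros; rfl)
          | exact if_congr (key2 _) rfl rfl
          | exact if_congr (key1 _) rfl rfl

/-- Build an index from an `eps`-component and a `tag`-component. -/
def mkIdx : ∀ s, Fin 2 → (Fin s → Fin 3) → Idx s
  | 0, e, _ => e
  | s + 1, e, t => (t (Fin.last s), mkIdx s e (fun i => t i.castSucc))

lemma eps_mkIdx : ∀ s (e : Fin 2) (t : Fin s → Fin 3), eps s (mkIdx s e t) = e
  | 0, _, _ => rfl
  | s + 1, e, t => eps_mkIdx s e _

lemma tag_mkIdx : ∀ s (e : Fin 2) (t : Fin s → Fin 3) (i : Fin s), tag s (mkIdx s e t) i = t i := by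
  intro s
  induction s with
  | zero => intro _ _ i; exact i.elim0
  | succ s ih =>
    intro e t i
    refine Fin.lastCases ?_ ?_ i
    · show tag (s+1) (t (Fin.last s), mkIdx s e fun j => t j.castSucc) (Fin.last s) = t (Fin.last s)
      rw [tag_last]
    · intro j
      show tag (s+1) (t (Fin.last s), mkIdx s e fun j => t j.castSucc) j.castSucc = t j.castSucc
      rw [tag_castSucc, ih]

lemma idx_ext : ∀ s (p p' : Idx s), eps s p = eps s p' → (∀ i, tag s p i = tag s p' i) → p = p' := by
  intro s
  induction s with
  | zero => intro p p' he _; exact he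
  | succ s ih =>
    rintro ⟨c, q⟩ ⟨c', q'⟩ he ht
    have h1 : c = c' := by
      have := ht (Fin.last s); rwa [tag_last, tag_last] at this
    have h2 : q = q' := by
      refine ih q q' he fun i => ?_
      have := ht i.castSucc; rwa [tag_castSucc, tag_castSucc] at this
    rw [h1, h2]

lemma yval_inj : Function.Injective yval := by
  intro a b h
  fin_cases a <;> fin_cases b <;> simp_all [yval] <;> norm_num at h

lemma cval_inj : Function.Injective cval := by
  intro a b h
  fin_cases a <;> fin_cases b <;> simp_all [cval] <;> norm_num at h

/-- The recursive linear system over a clique of `s` (possibly abstaining) sources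
`λ_1, …, λ_s` and one binary task `Y`: `A_s μ = r` and `B_s μ = r^B`, where `μ` is
the joint pmf vector, `r(U,Z) = P(∏_{z∈Z} z = 1, λ_j = 0 ∀ λ_j ∈ U)`, and
`r^B(U,Z) = P(∏_{z∈Z} z = -1, λ_j = 0 ∀ λ_j ∈ U)` for `Z ≠ ∅`, `r^B(U,∅) = 0`.
A tag of `0` means absent, `1` means membership in `Z`, `2` means membership
in `U`. -/
theorem clique_recursive_linear_system {Ω : Type*} [MeasureSpace Ω]
    [IsProbabilityMeasure (ℙ : Measure Ω)] (s : ℕ)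
    (Y : Ω → ℝ) (l : Fin s → Ω → ℝ)
    (hY : Measurable Y) (hl : ∀ i, Measurable (l i))
    (hYval : ∀ ω, Y ω = 1 ∨ Y ω = -1)
    (hlval : ∀ i ω, l i ω = 1 ∨ l i ω = 0 ∨ l i ω = -1)
    (μ r rB : Idx s → ℝ)
    (hμ : ∀ p, μ p = ((ℙ : Measure Ω)
      {ω | Y ω = yval (eps s p) ∧ ∀ i, l i ω = cval (tag s p i)}).toReal)
    (hr : ∀ p, r p = ((ℙ : Measure Ω)
      {ω | (if eps s p = 1 then Y ω else 1) *
              ∏ i ∈ univ.filter (fun i => tag s p i = 1), l i ω = 1 ∧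
            ∀ i, tag s p i = 2 → l i ω = 0}).toReal)
    (hrB : ∀ p, rB p =
      if eps s p = 1 ∨ ∃ i, tag s p i = 1 then
        ((ℙ : Measure Ω)
          {ω | (if eps s p = 1 then Y ω else 1) *
                  ∏ i ∈ univ.filter (fun i => tag s p i = 1), l i ω = -1 ∧
                ∀ i, tag s p i = 2 → l i ω = 0}).toReal
      else 0) :
    (ABmat s).1.mulVec μ = r ∧ (ABmat s).2.mulVec μ = rB := by
  classical
  set Ev : Idx s → Set Ω := fun p' =>
    {ω | Y ω = yval (eps s p') ∧ ∀ i, l i ω = cval (tag s p' i)} with hEv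
  have hEvMeas : ∀ p', MeasurableSet (Ev p') := by
    intro p'
    have h : Ev p' = Y ⁻¹' {yval (eps s p')} ∩ ⋂ i, (l i) ⁻¹' {cval (tag s p' i)} := by
      ext ω; simp [hEv, Set.mem_iInter, Set.mem_preimage]
    rw [h]
    exact (hY (measurableSet_singleton _)).inter
      (MeasurableSet.iInter fun i => hl i (measurableSet_singleton _))
  have hcover : ∀ ω, ∃ p', ω ∈ Ev p' := by
    intro ω
    refine ⟨mkIdx s (if Y ω = 1 then 0 else 1)
      (fun i => if l i ω = 1 then 0 else if l i ω = 0 then 1 else 2), ?_, ?_⟩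
    · rw [eps_mkIdx]
      rcases hYval ω with h | h <;> norm_num [h, yval]
    · intro i
      rw [tag_mkIdx]
      rcases hlval i ω with h | h | h <;> norm_num [h, cval] <;> rfl
  have hdisj : ∀ p' p'', p' ≠ p'' → Disjoint (Ev p') (Ev p'') := by
    intro p' p'' hne
    rw [Set.disjoint_left]
    rintro ω ⟨h1, h2⟩ ⟨h3, h4⟩
    exact hne (idx_ext s p' p'' (yval_inj (h1.symm.trans h3))
      (fun i => cval_inj ((h2 i).symm.trans (h4 i))))
  have key : ∀ (C : Idx s → Prop) (T : Set Ω),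
      (∀ p' ω, ω ∈ Ev p' → (ω ∈ T ↔ C p')) →
      ((ℙ : Measure Ω) T).toReal = ∑ p' ∈ univ.filter C, μ p' := by
    intro C T hT
    have hTeq : T = ⋃ p' ∈ univ.filter C, Ev p' := by
      ext ω
      simp only [Set.mem_iUnion, mem_filter, mem_univ, true_and]
      constructor
      · intro hω
        obtain ⟨p', hp'⟩ := hcover ω
        exact ⟨p', (hT p' ω hp').mp hω, hp'⟩
      · rintro ⟨p', hC, hp'⟩
        exact (hT p' ω hp').mpr hC
    rw [hTeq, measure_biUnion_finset (fun a _ b _ hab => hdisj a b hab)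
      (fun b _ => hEvMeas b),
      ENNReal.toReal_sum (fun a _ => measure_ne_top _ _)]
    exact Finset.sum_congr rfl fun p' _ => (hμ p').symm
  constructor
  · funext p
    have hmv : (ABmat s).1.mulVec μ p = ∑ p' ∈ univ.filter (condA s p), μ p' := by
      rw [Finset.sum_filter]
      simp only [Matrix.mulVec, dotProduct]
      exact Finset.sum_congr rfl fun p' _ => by
        show (ABmat s).1 p p' * μ p' = _; rw [(entry s p p').1, ite_mul, one_mul, zero_mul]
    rw [hmv, hr p]
    refine (key (condA s p) _ ?_).symm
    rintro p' ω ⟨h1, h2⟩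
    simp only [Set.mem_setOf_eq, h1, h2, condA]
  · funext p
    have hmv : (ABmat s).2.mulVec μ p = ∑ p' ∈ univ.filter (condB s p), μ p' := by
      rw [Finset.sum_filter]
      simp only [Matrix.mulVec, dotProduct]
      exact Finset.sum_congr rfl fun p' _ => by
        show (ABmat s).2 p p' * μ p' = _; rw [(entry s p p').2, ite_mul, one_mul, zero_mul]
    rw [hmv, hrB p]
    by_cases hne : eps s p = 1 ∨ ∃ i, tag s p i = 1
    · rw [if_pos hne]
      refine (key (condB s p) _ ?_).symm
      rintro p' ω ⟨h1, h2⟩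
      simp only [Set.mem_setOf_eq, h1, h2, condB]
      exact ⟨fun h => ⟨hne, h⟩, fun h => h.2⟩
    · rw [if_neg hne, Finset.filter_false_of_mem (fun p' _ h => hne h.1),
        Finset.sum_empty]
end

section
/- Let 0 < a_min ≤ 1 and let M_12, M_13, M_23, M̂_12, M̂_13, M̂_23 be real numbers whose absolute values all lie in the interval [a_min^2, 1]. Define |a| = sqrt(|M_12| * |M_13| / |M_23|) and |â| = sqrt(|M̂_12| * |M̂_13| / |M̂_23|), and assume |a| ≥ a_min and |â| ≥ a_min. Then, writing Δ_jk = M̂_jk − M_jk, one has (|â| − |a|)^2 ≤ (1/(4 a_min^2)) * ( |Δ_23|/a_min^4 + |Δ_13|/a_min^2 + |Δ_12|/a_min^2 )^2 ≤ (1/(4 a_min^2)) * (1/a_min^8 + 2/a_min^4) * (Δ_12^2 + Δ_13^2 + Δ_23^2). -/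
lemma cauchy3_aux (x y z v : ℝ) :
    (z * v ^ 2 + y * v + x * v) ^ 2 ≤ ((v ^ 2) ^ 2 + 2 * v ^ 2) * (x ^ 2 + y ^ 2 + z ^ 2) := by
  nlinarith [sq_nonneg (v ^ 2 * x - v * z), sq_nonneg (v ^ 2 * y - v * z),
    mul_nonneg (sq_nonneg v) (sq_nonneg (x - y))]

lemma ratio_sub_bound (t p q s p' q' s' : ℝ) (ht : 0 < t)
    (hp : t ≤ p) (hp1 : p ≤ 1) (hq : t ≤ q) (hq1 : q ≤ 1)
    (hs : t ≤ s) (hs1 : s ≤ 1) (hp' : t ≤ p') (hp1' : p' ≤ 1)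
    (hq' : t ≤ q') (hq1' : q' ≤ 1) (hs' : t ≤ s') (hs1' : s' ≤ 1) :
    |p' * q' / s' - p * q / s| ≤ |s' - s| / t ^ 2 + |q' - q| / t + |p' - p| / t := by
  have hspos : 0 < s := lt_of_lt_of_le ht hs
  have hspos' : 0 < s' := lt_of_lt_of_le ht hs'
  have step : |p' * q' / s' - p * q / s| ≤
      |p' * q' / s' - p * q' / s'| + (|p * q' / s' - p * q / s'| + |p * q / s' - p * q / s|) := by
    calc |p' * q' / s' - p * q / s| ≤ |p' * q' / s' - p * q' / s'| + |p * q' / s' - p * q / s| :=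
          abs_sub_le _ _ _
      _ ≤ |p' * q' / s' - p * q' / s'| + (|p * q' / s' - p * q / s'| + |p * q / s' - p * q / s|) := by
          gcongr; exact abs_sub_le _ _ _
  have t1 : |p' * q' / s' - p * q' / s'| ≤ |p' - p| / t := by
    have : p' * q' / s' - p * q' / s' = (p' - p) * (q' / s') := by field_simp
    rw [this, abs_mul]
    have h2 : |q' / s'| ≤ 1 / t := by
      rw [abs_of_nonneg (div_nonneg (by linarith) (by linarith))]
      exact div_le_div₀ zero_le_one hq1' ht hs'
    calc |p' - p| * |q' / s'| ≤ |p' - p| * (1 / t) := by gcongr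
      _ = |p' - p| / t := by ring
  have t2 : |p * q' / s' - p * q / s'| ≤ |q' - q| / t := by
    have : p * q' / s' - p * q / s' = (q' - q) * (p / s') := by field_simp
    rw [this, abs_mul]
    have h2 : |p / s'| ≤ 1 / t := by
      rw [abs_of_nonneg (div_nonneg (by linarith) (by linarith))]
      exact div_le_div₀ zero_le_one hp1 ht hs'
    calc |q' - q| * |p / s'| ≤ |q' - q| * (1 / t) := by gcongr
      _ = |q' - q| / t := by ring
  have t3 : |p * q / s' - p * q / s| ≤ |s' - s| / t ^ 2 := by
    have : p * q / s' - p * q / s = (s - s') * (p * q / (s' * s)) := by field_simp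
    rw [this, abs_mul]
    have h2 : |p * q / (s' * s)| ≤ 1 / t ^ 2 := by
      rw [abs_of_nonneg (div_nonneg (mul_nonneg (by linarith) (by linarith)) (mul_nonneg (by linarith) (by linarith)))]
      apply div_le_div₀ zero_le_one (by nlinarith) (by positivity) (by nlinarith)
    have : |s - s'| = |s' - s| := abs_sub_comm _ _
    calc |s - s'| * |p * q / (s' * s)| ≤ |s' - s| * (1 / t ^ 2) := by rw [this]; gcongr
      _ = |s' - s| / t ^ 2 := by ring
  linarith

/-- Deterministic perturbation bound for the triplet method: the error in the
recovered accuracy magnitude is controlled by the errors in the pairwise second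
moments. -/
theorem triplet_perturbation_bound (amin : ℝ) (h0 : 0 < amin) (h1 : amin ≤ 1)
    (M12 M13 M23 M12h M13h M23h : ℝ)
    (hM12 : |M12| ∈ Set.Icc (amin ^ 2) 1) (hM13 : |M13| ∈ Set.Icc (amin ^ 2) 1)
    (hM23 : |M23| ∈ Set.Icc (amin ^ 2) 1) (hM12h : |M12h| ∈ Set.Icc (amin ^ 2) 1)
    (hM13h : |M13h| ∈ Set.Icc (amin ^ 2) 1) (hM23h : |M23h| ∈ Set.Icc (amin ^ 2) 1)
    (a ah : ℝ)
    (ha : a = Real.sqrt (|M12| * |M13| / |M23|))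
    (hah : ah = Real.sqrt (|M12h| * |M13h| / |M23h|))
    (ha_min : amin ≤ a) (hah_min : amin ≤ ah)
    (Δ12 Δ13 Δ23 : ℝ)
    (hΔ12 : Δ12 = M12h - M12) (hΔ13 : Δ13 = M13h - M13) (hΔ23 : Δ23 = M23h - M23) :
    (ah - a) ^ 2 ≤
      1 / (4 * amin ^ 2) *
        (|Δ23| / amin ^ 4 + |Δ13| / amin ^ 2 + |Δ12| / amin ^ 2) ^ 2 ∧
    1 / (4 * amin ^ 2) *
        (|Δ23| / amin ^ 4 + |Δ13| / amin ^ 2 + |Δ12| / amin ^ 2) ^ 2 ≤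
      1 / (4 * amin ^ 2) * (1 / amin ^ 8 + 2 / amin ^ 4) *
        (Δ12 ^ 2 + Δ13 ^ 2 + Δ23 ^ 2) := by
  have ht : (0:ℝ) < amin ^ 2 := by positivity
  obtain ⟨t, htdef⟩ : ∃ t : ℝ, t = amin ^ 2 := ⟨_, rfl⟩
  rw [← htdef] at ht hM12 hM13 hM23 hM12h hM13h hM23h
  have hM23pos : 0 < |M23| := lt_of_lt_of_le ht hM23.1
  have hM23hpos : 0 < |M23h| := lt_of_lt_of_le ht hM23h.1
  obtain ⟨r, hrdef⟩ : ∃ r : ℝ, r = |M12| * |M13| / |M23| := ⟨_, rfl⟩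
  obtain ⟨rh, hrhdef⟩ : ∃ rh : ℝ, rh = |M12h| * |M13h| / |M23h| := ⟨_, rfl⟩
  rw [← hrdef] at ha
  rw [← hrhdef] at hah
  have hrnn : 0 ≤ r := by rw [hrdef]; positivity
  have hrhnn : 0 ≤ rh := by rw [hrhdef]; positivity
  have ha2 : a ^ 2 = r := by rw [ha, Real.sq_sqrt hrnn]
  have hah2 : ah ^ 2 = rh := by rw [hah, Real.sq_sqrt hrhnn]
  -- |rh - r| bound
  have key : |rh - r| ≤ |Δ23| / t ^ 2 + |Δ13| / t + |Δ12| / t := by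
    have h := ratio_sub_bound t |M12| |M13| |M23| |M12h| |M13h| |M23h| ht
      hM12.1 hM12.2 hM13.1 hM13.2 hM23.1 hM23.2 hM12h.1 hM12h.2
      hM13h.1 hM13h.2 hM23h.1 hM23h.2
    have e23 : |(|M23h| - |M23|)| ≤ |Δ23| := hΔ23 ▸ abs_abs_sub_abs_le_abs_sub _ _
    have e13 : |(|M13h| - |M13|)| ≤ |Δ13| := hΔ13 ▸ abs_abs_sub_abs_le_abs_sub _ _
    have e12 : |(|M12h| - |M12|)| ≤ |Δ12| := hΔ12 ▸ abs_abs_sub_abs_le_abs_sub _ _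
    rw [hrdef, hrhdef]
    have hh := h
    have g1 : |(|M23h| - |M23|)| / t ^ 2 ≤ |Δ23| / t ^ 2 := by gcongr
    have g2 : |(|M13h| - |M13|)| / t ≤ |Δ13| / t := by gcongr
    have g3 : |(|M12h| - |M12|)| / t ≤ |Δ12| / t := by gcongr
    linarith
  obtain ⟨B, hBdef⟩ : ∃ B : ℝ, B = |Δ23| / t ^ 2 + |Δ13| / t + |Δ12| / t := ⟨_, rfl⟩
  rw [← hBdef] at key
  have hBnn : 0 ≤ B := le_trans (abs_nonneg _) key
  have hsq : (rh - r) ^ 2 ≤ B ^ 2 := by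
    have := sq_abs (rh - r)
    nlinarith [abs_nonneg (rh - r)]
  have hdiff : (ah - a) * (ah + a) = rh - r := by linear_combination hah2 - ha2
  have hprod : (ah - a) ^ 2 * (ah + a) ^ 2 = (rh - r) ^ 2 := by
    rw [← hdiff]; ring
  have hsum : 2 * amin ≤ ah + a := by linarith
  have first : (ah - a) ^ 2 ≤ 1 / (4 * amin ^ 2) * B ^ 2 := by
    have hge : 0 ≤ (ah + a) ^ 2 - 4 * amin ^ 2 := by
      have w1 : 0 ≤ ah + a - 2 * amin := by linarith
      have w2 : 0 ≤ ah + a + 2 * amin := by linarith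
      linarith [mul_nonneg w1 w2]
    have h4 : (ah - a) ^ 2 * (4 * amin ^ 2) ≤ (ah - a) ^ 2 * (ah + a) ^ 2 :=
      by linarith [mul_nonneg (sq_nonneg (ah - a)) hge]
    have h5 : (ah - a) ^ 2 * (4 * amin ^ 2) ≤ B ^ 2 := by linarith [h4, hprod, hsq]
    rw [mul_comm, ← div_eq_mul_one_div, le_div_iff₀ (by positivity)]
    linarith [h5]
  have hBeq : B = |Δ23| / amin ^ 4 + |Δ13| / amin ^ 2 + |Δ12| / amin ^ 2 := by
    rw [hBdef, htdef]; ring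
  constructor
  · rw [← hBeq]; exact first
  · rw [← hBeq, hBdef, htdef]
    have h8 : amin ^ 8 = (amin ^ 4) ^ 2 := by ring
    have ht4 : (0:ℝ) < amin ^ 4 := by positivity
    have key2 : (|Δ23| / amin ^ 4 + |Δ13| / amin ^ 2 + |Δ12| / amin ^ 2) ^ 2 ≤
        (1 / amin ^ 8 + 2 / amin ^ 4) * (Δ12 ^ 2 + Δ13 ^ 2 + Δ23 ^ 2) := by
      rw [← sq_abs Δ12, ← sq_abs Δ13, ← sq_abs Δ23]
      calc (|Δ23| / amin ^ 4 + |Δ13| / amin ^ 2 + |Δ12| / amin ^ 2) ^ 2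
          = (|Δ23| * (1 / amin ^ 2) ^ 2 + |Δ13| * (1 / amin ^ 2) + |Δ12| * (1 / amin ^ 2)) ^ 2 := by
            ring
        _ ≤ (((1 / amin ^ 2) ^ 2) ^ 2 + 2 * (1 / amin ^ 2) ^ 2) * (|Δ12| ^ 2 + |Δ13| ^ 2 + |Δ23| ^ 2) :=
            cauchy3_aux _ _ _ _
        _ = (1 / amin ^ 8 + 2 / amin ^ 4) * (|Δ12| ^ 2 + |Δ13| ^ 2 + |Δ23| ^ 2) := by ring
    have hc : (0:ℝ) ≤ 1 / (4 * amin ^ 2) := by positivity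
    calc 1 / (4 * amin ^ 2) * (|Δ23| / (amin^2) ^ 2 + |Δ13| / amin ^ 2 + |Δ12| / amin ^ 2) ^ 2
        = 1 / (4 * amin ^ 2) * (|Δ23| / amin ^ 4 + |Δ13| / amin ^ 2 + |Δ12| / amin ^ 2) ^ 2 := by
          ring
      _ ≤ 1 / (4 * amin ^ 2) * ((1 / amin ^ 8 + 2 / amin ^ 4) * (Δ12 ^ 2 + Δ13 ^ 2 + Δ23 ^ 2)) :=
          mul_le_mul_of_nonneg_left key2 hc
      _ = 1 / (4 * amin ^ 2) * (1 / amin ^ 8 + 2 / amin ^ 4) * (Δ12 ^ 2 + Δ13 ^ 2 + Δ23 ^ 2) := by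
          ring
end

section
/- Fix m ≥ 1, real numbers θ_Y and δ, and v ∈ {−1, 1}^m. Let (Y, λ) ∈ {−1,1} × {−1,1}^m be distributed according to P_v(y, λ) = (1/z_v) exp( θ_Y y + δ Σ_{j=1}^m v_j λ_j y ), where z_v is the normalizing constant. Then for every i ∈ {1, …, m}, E_{P_v}[λ_i Y] = v_i * ( e^δ / cosh(δ) − 1 ). -/
open Finset

/-- Spin value of a boolean: `true ↦ 1`, `false ↦ -1`. -/
def sgn (b : Bool) : ℝ := if b then 1 else -1

/-- Unnormalized weight of the binary Ising distribution `P_v` on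
`{-1,1} × {-1,1}^m` with canonical parameters `θ_Y` and `δ v`. -/
noncomputable def isingWeight (m : ℕ) (θY δ : ℝ) (v : Fin m → ℝ)
    (y : Bool) (lam : Fin m → Bool) : ℝ :=
  Real.exp (θY * sgn y + δ * ∑ j, v j * sgn (lam j) * sgn y)

/-- Partition function of `P_v`. -/
noncomputable def isingZ (m : ℕ) (θY δ : ℝ) (v : Fin m → ℝ) : ℝ :=
  ∑ y : Bool, ∑ lam : Fin m → Bool, isingWeight m θY δ v y lam

lemma weight_eq (m : ℕ) (θY δ : ℝ) (v : Fin m → ℝ) (y : Bool) (lam : Fin m → Bool) :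
    isingWeight m θY δ v y lam =
      Real.exp (θY * sgn y) * ∏ j, Real.exp (δ * (v j * sgn (lam j) * sgn y)) := by
  rw [isingWeight, Real.exp_add, ← Real.exp_sum, Finset.mul_sum]

lemma cosh_step (δ s w : ℝ) (hs : s = 1 ∨ s = -1) (hw : w = 1 ∨ w = -1) :
    Real.exp (δ * (w * 1 * s)) + Real.exp (δ * (w * (-1) * s)) = 2 * Real.cosh δ := by
  rcases hs with hs | hs <;> rcases hw with hw | hw <;>
    simp [hs, hw, Real.cosh_eq] <;> ring

lemma sinh_step (δ s w : ℝ) (hs : s = 1 ∨ s = -1) (hw : w = 1 ∨ w = -1) :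
    Real.exp (δ * (w * 1 * s)) - Real.exp (δ * (w * (-1) * s)) = 2 * (w * s) * Real.sinh δ := by
  rcases hs with hs | hs <;> rcases hw with hw | hw <;>
    simp [hs, hw, Real.sinh_eq] <;> ring

lemma sum_lam_Z (m : ℕ) (δ : ℝ) (v : Fin m → ℝ) (hv : ∀ j, v j = 1 ∨ v j = -1)
    (s : ℝ) (hs : s = 1 ∨ s = -1) :
    (∑ lam : Fin m → Bool, ∏ j, Real.exp (δ * (v j * sgn (lam j) * s)))
      = (2 * Real.cosh δ) ^ m := by
  rw [← Fintype.prod_sum (fun j b => Real.exp (δ * (v j * sgn b * s)))]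
  have : ∀ j : Fin m, (∑ b : Bool, Real.exp (δ * (v j * sgn b * s))) = 2 * Real.cosh δ := by
    intro j
    rw [Fintype.sum_bool]
    simpa [sgn] using cosh_step δ s (v j) hs (hv j)
  rw [Finset.prod_congr rfl (fun j _ => this j), Finset.prod_const, Finset.card_univ,
    Fintype.card_fin]

lemma sum_lam_N (m : ℕ) (δ : ℝ) (v : Fin m → ℝ) (hv : ∀ j, v j = 1 ∨ v j = -1)
    (s : ℝ) (hs : s = 1 ∨ s = -1) (i : Fin m) :
    (∑ lam : Fin m → Bool, sgn (lam i) * ∏ j, Real.exp (δ * (v j * sgn (lam j) * s)))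
      = (2 * (v i * s) * Real.sinh δ) * (2 * Real.cosh δ) ^ (m - 1) := by
  have h1 : ∀ lam : Fin m → Bool,
      sgn (lam i) * ∏ j, Real.exp (δ * (v j * sgn (lam j) * s))
        = ∏ j, (if j = i then sgn (lam j) else 1) * Real.exp (δ * (v j * sgn (lam j) * s)) := by
    intro lam
    rw [Finset.prod_mul_distrib, Finset.prod_ite_eq' Finset.univ i (fun j => sgn (lam j))]
    simp
  simp_rw [h1]
  rw [← Fintype.prod_sum
    (fun j b => (if j = i then sgn b else 1) * Real.exp (δ * (v j * sgn b * s)))]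
  rw [← Finset.mul_prod_erase Finset.univ _ (Finset.mem_univ i)]
  have hA : (∑ b : Bool, (if i = i then sgn b else 1) * Real.exp (δ * (v i * sgn b * s)))
      = 2 * (v i * s) * Real.sinh δ := by
    rw [Fintype.sum_bool]
    simpa [sgn, sub_eq_add_neg] using sinh_step δ s (v i) hs (hv i)
  rw [hA]
  congr 1
  have : ∀ j ∈ Finset.univ.erase i,
      (∑ b : Bool, (if j = i then sgn b else 1) * Real.exp (δ * (v j * sgn b * s)))
        = 2 * Real.cosh δ := by
    intro j hj
    have hji : j ≠ i := (Finset.mem_erase.mp hj).1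
    rw [Fintype.sum_bool]
    simp only [hji, if_neg, one_mul]
    simpa [sgn] using cosh_step δ s (v j) hs (hv j)
  rw [Finset.prod_congr rfl this, Finset.prod_const, Finset.card_erase_of_mem (Finset.mem_univ i),
    Finset.card_univ, Fintype.card_fin]

/-- In the binary Ising family `P_v(y, λ) ∝ exp(θ_Y y + δ ∑_j v_j λ_j y)` with
`v ∈ {-1,1}^m`, the expectation of `λ_i Y` equals `v_i (e^δ / cosh δ − 1)`. -/
theorem ising_accuracy_expectation (m : ℕ) (hm : 1 ≤ m) (θY δ : ℝ)
    (v : Fin m → ℝ) (hv : ∀ j, v j = 1 ∨ v j = -1) :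
    ∀ i : Fin m,
      (∑ y : Bool, ∑ lam : Fin m → Bool,
          sgn (lam i) * sgn y * isingWeight m θY δ v y lam) / isingZ m θY δ v =
        v i * (Real.exp δ / Real.cosh δ - 1) := by
  intro i
  have hsgn : ∀ y : Bool, sgn y = 1 ∨ sgn y = -1 := by
    intro y; cases y <;> simp [sgn]
  have hZ : isingZ m θY δ v
      = (Real.exp θY + Real.exp (-θY)) * (2 * Real.cosh δ) ^ m := by
    rw [isingZ]
    have : ∀ y : Bool, (∑ lam : Fin m → Bool, isingWeight m θY δ v y lam)
        = Real.exp (θY * sgn y) * (2 * Real.cosh δ) ^ m := by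
      intro y
      simp_rw [weight_eq]
      rw [← Finset.mul_sum, sum_lam_Z m δ v hv (sgn y) (hsgn y)]
    simp_rw [this, Fintype.sum_bool]
    simp [sgn]
    ring
  have hN : (∑ y : Bool, ∑ lam : Fin m → Bool,
        sgn (lam i) * sgn y * isingWeight m θY δ v y lam)
      = (Real.exp θY + Real.exp (-θY)) * (2 * (v i) * Real.sinh δ)
          * (2 * Real.cosh δ) ^ (m - 1) := by
    have : ∀ y : Bool, (∑ lam : Fin m → Bool,
          sgn (lam i) * sgn y * isingWeight m θY δ v y lam)
        = Real.exp (θY * sgn y) * (2 * (v i) * Real.sinh δ)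
            * (2 * Real.cosh δ) ^ (m - 1) := by
      intro y
      have hs2 : sgn y * sgn y = 1 := by cases y <;> norm_num [sgn]
      simp_rw [weight_eq]
      have : ∀ lam : Fin m → Bool,
          sgn (lam i) * sgn y *
              (Real.exp (θY * sgn y) * ∏ j, Real.exp (δ * (v j * sgn (lam j) * sgn y)))
            = (sgn y * Real.exp (θY * sgn y)) *
                (sgn (lam i) * ∏ j, Real.exp (δ * (v j * sgn (lam j) * sgn y))) := by
        intro lam; ring
      simp_rw [this]
      rw [← Finset.mul_sum, sum_lam_N m δ v hv (sgn y) (hsgn y) i]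
      have : sgn y * (2 * (v i * sgn y) * Real.sinh δ) = 2 * v i * Real.sinh δ := by
        calc sgn y * (2 * (v i * sgn y) * Real.sinh δ)
            = (sgn y * sgn y) * (2 * v i * Real.sinh δ) := by ring
          _ = 2 * v i * Real.sinh δ := by rw [hs2]; ring
      calc sgn y * Real.exp (θY * sgn y) *
            (2 * (v i * sgn y) * Real.sinh δ * (2 * Real.cosh δ) ^ (m - 1))
          = Real.exp (θY * sgn y) *
              (sgn y * (2 * (v i * sgn y) * Real.sinh δ)) * (2 * Real.cosh δ) ^ (m - 1) := by ring
        _ = _ := by rw [this]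
    simp_rw [this, Fintype.sum_bool]
    simp [sgn]
    try ring
  rw [hN, hZ]
  have hE : Real.exp θY + Real.exp (-θY) > 0 := by positivity
  have hC : Real.cosh δ > 0 := Real.cosh_pos δ
  have hpow : (2 * Real.cosh δ) ^ m = (2 * Real.cosh δ) ^ (m - 1) * (2 * Real.cosh δ) := by
    have h : m = (m - 1) + 1 := by omega
    conv_lhs => rw [h]
    rw [pow_succ]
  rw [hpow]
  have hsinh : Real.sinh δ = Real.exp δ - Real.cosh δ := by
    rw [Real.sinh_eq, Real.cosh_eq]; ring
  have hpow' : (0:ℝ) < (2 * Real.cosh δ) ^ (m - 1) := by positivity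
  field_simp
  rw [hsinh]
end

section
/- Fix m ≥ 1, real numbers θ_Y and δ ≥ 0, and let v, v' ∈ {−1, 1}^m differ in exactly one coordinate. Let P_v(y, λ) = (1/z_v) exp( θ_Y y + δ Σ_{j=1}^m v_j λ_j y ) and P_{v'}(y, λ) = (1/z_{v'}) exp( θ_Y y + δ Σ_{j=1}^m v'_j λ_j y ) be the corresponding probability mass functions on {−1,1} × {−1,1}^m. Then KL(P_v ‖ P_{v'}) = 2δ ( e^δ / cosh(δ) − 1 ) ≤ 2δ^2. -/
open Finset

/-- The probability mass function of `P_v`. -/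
noncomputable def isingPMF (m : ℕ) (θY δ : ℝ) (v : Fin m → ℝ)
    (s : Bool × (Fin m → Bool)) : ℝ :=
  isingWeight m θY δ v s.1 s.2 / isingZ m θY δ v

/-- Kullback–Leibler divergence between probability mass functions on a finite
type, with value `∞` when absolute continuity fails. -/
noncomputable def klFin {α : Type*} [Fintype α] (P Q : α → ℝ) : ENNReal :=
  if ∀ a, 0 < P a → 0 < Q a then
    ENNReal.ofReal (∑ a, if 0 < P a then P a * Real.log (P a / Q a) else 0)
  else ⊤

/-! ### Auxiliary lemmas -/

lemma sgn_not (b : Bool) : sgn (!b) = - sgn b := by cases b <;> simp [sgn]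

lemma sinh_le_mul_cosh {x : ℝ} (hx : 0 ≤ x) : Real.sinh x ≤ x * Real.cosh x := by
  have hmono : MonotoneOn (fun y => y * Real.cosh y - Real.sinh y) (Set.Ici 0) := by
    apply monotoneOn_of_deriv_nonneg (convex_Ici 0)
    · exact ((continuous_id.mul Real.continuous_cosh).sub Real.continuous_sinh).continuousOn
    · exact ((differentiable_id.mul Real.differentiable_cosh).sub
        Real.differentiable_sinh).differentiableOn
    · intro y hy
      rw [interior_Ici, Set.mem_Ioi] at hy
      have h1 : HasDerivAt (fun y : ℝ => y * Real.cosh y - Real.sinh y)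
          (1 * Real.cosh y + y * Real.sinh y - Real.cosh y) y :=
        ((hasDerivAt_id y).mul (Real.hasDerivAt_cosh y)).sub (Real.hasDerivAt_sinh y)
      rw [h1.deriv]
      nlinarith [Real.sinh_nonneg_iff.2 hy.le]
  have := hmono (Set.self_mem_Ici) (Set.mem_Ici.2 hx) hx
  simp at this
  linarith

lemma tanh_aux (a W t : ℝ) (hW : 0 < W) (ht : t = 1 ∨ t = -1) :
    (W - W * Real.exp (-(2 * a * t))) * t
      = Real.tanh a * (W + W * Real.exp (-(2 * a * t))) := by
  have h1 : Real.exp a * Real.exp (-a) = 1 := by rw [← Real.exp_add]; simp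
  have hc : (0:ℝ) < Real.exp a + Real.exp (-a) := by positivity
  rw [Real.tanh_eq_sinh_div_cosh, Real.sinh_eq, Real.cosh_eq]
  rcases ht with rfl | rfl
  · have h2 : Real.exp (-(2 * a * 1)) = Real.exp (-a) * Real.exp (-a) := by
      rw [← Real.exp_add]; ring_nf
    rw [h2]; field_simp; linear_combination (-2*Real.exp (-a)) * h1
  · have h2 : Real.exp (-(2 * a * -1)) = Real.exp a * Real.exp a := by
      rw [← Real.exp_add]; ring_nf
    rw [h2]; field_simp; linear_combination (2*Real.exp a) * h1

/-- Flip coordinate `i`. -/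
def flipAt {m : ℕ} (i : Fin m) (lam : Fin m → Bool) : Fin m → Bool :=
  Function.update lam i (!(lam i))

lemma flipAt_self {m : ℕ} (i : Fin m) (lam : Fin m → Bool) : flipAt i lam i = !(lam i) := by
  simp [flipAt]

lemma flipAt_ne {m : ℕ} (i : Fin m) (lam : Fin m → Bool) {j : Fin m} (hj : j ≠ i) :
    flipAt i lam j = lam j := by
  simp [flipAt, Function.update_of_ne hj]

lemma flipAt_involutive {m : ℕ} (i : Fin m) : Function.Involutive (flipAt (m := m) i) := by
  intro lam; funext j
  by_cases hj : j = i
  · subst hj; simp [flipAt]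
  · rw [flipAt_ne i _ hj, flipAt_ne i _ hj]

lemma weight_flip (m : ℕ) (θY δ : ℝ) (v : Fin m → ℝ) (i : Fin m) (y : Bool)
    (lam : Fin m → Bool) :
    isingWeight m θY δ v y (flipAt i lam)
      = isingWeight m θY δ v y lam
          * Real.exp (-(2 * (δ * v i) * (sgn (lam i) * sgn y))) := by
  unfold isingWeight
  rw [← Real.exp_add]
  congr 1
  have hs : (∑ j, v j * sgn (flipAt i lam j) * sgn y) - ∑ j, v j * sgn (lam j) * sgn y
      = -2 * (v i * (sgn (lam i) * sgn y)) := by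
    rw [← Finset.sum_sub_distrib, Finset.sum_eq_single i]
    · rw [flipAt_self, sgn_not]; ring
    · intro j _ hj; rw [flipAt_ne i lam hj]; ring
    · intro h; exact absurd (Finset.mem_univ i) h
  linear_combination δ * hs

lemma sum_weight_corr (m : ℕ) (θY δ : ℝ) (v : Fin m → ℝ) (i : Fin m) (y : Bool) :
    ∑ lam : Fin m → Bool, isingWeight m θY δ v y lam * (sgn (lam i) * sgn y)
      = Real.tanh (δ * v i) * ∑ lam : Fin m → Bool, isingWeight m θY δ v y lam := by
  set W := isingWeight m θY δ v with hW
  have hb2 : ∑ lam : Fin m → Bool, W y lam * (sgn (lam i) * sgn y)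
      = - ∑ lam : Fin m → Bool, W y (flipAt i lam) * (sgn (lam i) * sgn y) := by
    rw [← Finset.sum_neg_distrib]
    apply Fintype.sum_bijective (flipAt i) (flipAt_involutive i).bijective
    intro lam
    rw [flipAt_involutive i lam, flipAt_self, sgn_not]
    ring
  have e1 : ∑ lam : Fin m → Bool, W y (flipAt i lam) = ∑ lam : Fin m → Bool, W y lam :=
    Fintype.sum_bijective (flipAt i) (flipAt_involutive i).bijective _ _ (fun lam => rfl)
  have hpt : ∀ lam : Fin m → Bool,
      (W y lam - W y (flipAt i lam)) * (sgn (lam i) * sgn y)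
        = Real.tanh (δ * v i) * (W y lam + W y (flipAt i lam)) := by
    intro lam
    rw [hW, weight_flip m θY δ v i y lam]
    exact tanh_aux (δ * v i) (isingWeight m θY δ v y lam) _ (Real.exp_pos _)
      (by cases lam i <;> cases y <;> norm_num [sgn])
  have hsum : (∑ lam : Fin m → Bool, W y lam * (sgn (lam i) * sgn y))
      - (∑ lam : Fin m → Bool, W y (flipAt i lam) * (sgn (lam i) * sgn y))
      = Real.tanh (δ * v i) * ((∑ lam : Fin m → Bool, W y lam)
          + ∑ lam : Fin m → Bool, W y (flipAt i lam)) := by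
    rw [← Finset.sum_sub_distrib, ← Finset.sum_add_distrib, Finset.mul_sum]
    exact Finset.sum_congr rfl fun lam _ => by rw [← hpt lam]; ring
  linear_combination (1/2) * hsum + (1/2) * hb2 + (Real.tanh (δ * v i) / 2) * e1

lemma isingZ_pos (m : ℕ) (θY δ : ℝ) (v : Fin m → ℝ) : 0 < isingZ m θY δ v := by
  unfold isingZ
  exact Finset.sum_pos
    (fun y _ => Finset.sum_pos (fun lam _ => Real.exp_pos _) Finset.univ_nonempty)
    Finset.univ_nonempty

/-- KL divergence between neighboring members of the binary Ising family: if `v`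
and `v'` differ in exactly one coordinate, then
`KL(P_v ‖ P_{v'}) = 2δ(e^δ/cosh δ − 1) ≤ 2δ²`. -/
theorem ising_neighbor_KL (m : ℕ) (hm : 1 ≤ m) (θY δ : ℝ) (hδ : 0 ≤ δ)
    (v v' : Fin m → ℝ) (hv : ∀ j, v j = 1 ∨ v j = -1) (hv' : ∀ j, v' j = 1 ∨ v' j = -1)
    (hdiff : ∃ i, v i ≠ v' i ∧ ∀ j, j ≠ i → v j = v' j) :
    klFin (isingPMF m θY δ v) (isingPMF m θY δ v') =
        ENNReal.ofReal (2 * δ * (Real.exp δ / Real.cosh δ - 1)) ∧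
      klFin (isingPMF m θY δ v) (isingPMF m θY δ v') ≤
        ENNReal.ofReal (2 * δ ^ 2) := by
  obtain ⟨i, hne, hsame⟩ := hdiff
  have hv'i : v' i = - v i := by
    rcases hv i with h1 | h1 <;> rcases hv' i with h2 | h2 <;> simp_all
  have hZv : 0 < isingZ m θY δ v := isingZ_pos m θY δ v
  have hZv' : 0 < isingZ m θY δ v' := isingZ_pos m θY δ v'
  have hPv : ∀ a, 0 < isingPMF m θY δ v a := fun a => div_pos (Real.exp_pos _) hZv
  have hPv' : ∀ a, 0 < isingPMF m θY δ v' a := fun a => div_pos (Real.exp_pos _) hZv'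
  -- Z equality
  have hW'W : ∀ (y : Bool) (lam : Fin m → Bool),
      isingWeight m θY δ v' y lam = isingWeight m θY δ v y (flipAt i lam) := by
    intro y lam
    have hs : (∑ j, v' j * sgn (lam j) * sgn y)
        = ∑ j, v j * sgn (flipAt i lam j) * sgn y := by
      refine Finset.sum_congr rfl fun j _ => ?_
      by_cases hj : j = i
      · subst hj
        rw [hv'i, flipAt_self, sgn_not]; ring
      · rw [← hsame j hj, flipAt_ne i lam hj]
    unfold isingWeight
    rw [hs]
  have hZeq : isingZ m θY δ v' = isingZ m θY δ v := by
    unfold isingZ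
    refine Finset.sum_congr rfl fun y _ => ?_
    rw [Finset.sum_congr rfl fun lam _ => hW'W y lam]
    exact Fintype.sum_bijective (flipAt i) (flipAt_involutive i).bijective _ _ fun lam => rfl
  -- exponent sum difference
  have hsum0 : ∀ (y : Bool) (lam : Fin m → Bool),
      (∑ j, v j * sgn (lam j) * sgn y) - ∑ j, v' j * sgn (lam j) * sgn y
        = 2 * (v i * (sgn (lam i) * sgn y)) := by
    intro y lam
    rw [← Finset.sum_sub_distrib, Finset.sum_eq_single i]
    · rw [hv'i]; ring
    · intro j _ hj; rw [hsame j hj]; ring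
    · intro h; exact absurd (Finset.mem_univ i) h
  -- the KL sum
  have hkey : (∑ a : Bool × (Fin m → Bool),
      if 0 < isingPMF m θY δ v a then
        isingPMF m θY δ v a * Real.log (isingPMF m θY δ v a / isingPMF m θY δ v' a)
      else 0) = 2 * δ * Real.tanh δ := by
    have h1 : ∀ a : Bool × (Fin m → Bool),
        (if 0 < isingPMF m θY δ v a then
          isingPMF m θY δ v a * Real.log (isingPMF m θY δ v a / isingPMF m θY δ v' a)
        else 0)
        = isingPMF m θY δ v a * (2 * δ * v i * (sgn (a.2 i) * sgn a.1)) := by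
      intro a
      rw [if_pos (hPv a)]
      congr 1
      have hratio : isingPMF m θY δ v a / isingPMF m θY δ v' a
          = isingWeight m θY δ v a.1 a.2 / isingWeight m θY δ v' a.1 a.2 := by
        unfold isingPMF
        rw [hZeq]
        have hne1 : isingWeight m θY δ v' a.1 a.2 ≠ 0 := (Real.exp_pos _).ne'
        have hne2 : isingZ m θY δ v ≠ 0 := hZv.ne'
        field_simp
      rw [hratio]
      unfold isingWeight
      rw [← Real.exp_sub, Real.log_exp]
      linear_combination δ * hsum0 a.1 a.2
    rw [Finset.sum_congr rfl fun a _ => h1 a, Fintype.sum_prod_type]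
    have hstep : ∀ y : Bool, ∑ lam : Fin m → Bool,
        isingPMF m θY δ v (y, lam) * (2 * δ * v i * (sgn (lam i) * sgn y))
        = (2 * δ * v i * Real.tanh (δ * v i) / isingZ m θY δ v)
            * ∑ lam : Fin m → Bool, isingWeight m θY δ v y lam := by
      intro y
      have : ∑ lam : Fin m → Bool,
          isingPMF m θY δ v (y, lam) * (2 * δ * v i * (sgn (lam i) * sgn y))
          = (2 * δ * v i / isingZ m θY δ v)
              * ∑ lam : Fin m → Bool, isingWeight m θY δ v y lam * (sgn (lam i) * sgn y) := by
        rw [Finset.mul_sum]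
        exact Finset.sum_congr rfl fun lam _ => by unfold isingPMF; ring
      rw [this, sum_weight_corr m θY δ v i y]
      ring
    rw [Finset.sum_congr rfl fun y _ => hstep y, ← Finset.mul_sum]
    have : ∑ y : Bool, ∑ lam : Fin m → Bool, isingWeight m θY δ v y lam = isingZ m θY δ v :=
      rfl
    rw [this, div_mul_cancel₀ _ hZv.ne']
    rcases hv i with h | h
    · rw [h]; norm_num
    · rw [h]
      rw [show δ * (-1 : ℝ) = -δ by ring, Real.tanh_neg]
      ring
  have hcosh : (0:ℝ) < Real.cosh δ := Real.cosh_pos (x := δ)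
  constructor
  · rw [klFin, if_pos fun a _ => hPv' a, hkey]
    congr 1
    rw [Real.tanh_eq_sinh_div_cosh, ← Real.cosh_add_sinh]
    field_simp
    ring
  · rw [klFin, if_pos fun a _ => hPv' a, hkey]
    apply ENNReal.ofReal_le_ofReal
    have ht : Real.tanh δ ≤ δ := by
      rw [Real.tanh_eq_sinh_div_cosh, div_le_iff₀ hcosh]
      exact sinh_le_mul_cosh hδ
    nlinarith
end

section
/- Let S be a nonempty finite set and φ : S → ℝ^m a map with |φ(s)_j| ≤ 1 for all s ∈ S and j ∈ {1,…,m}. For θ ∈ ℝ^m define the probability mass function P_θ(s) = exp(⟨θ, φ(s)⟩) / Σ_{s'∈S} exp(⟨θ, φ(s')⟩). Then for all θ, θ' ∈ ℝ^m, KL(P_θ ‖ P_{θ'}) ≤ 2 √m ‖θ − θ'‖_2. -/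
open Finset

/-- The exponential-family (Gibbs) pmf with sufficient statistics `φ` and canonical
parameter `θ`. -/
noncomputable def gibbs {S : Type*} [Fintype S] {m : ℕ}
    (φ : S → Fin m → ℝ) (θ : Fin m → ℝ) (s : S) : ℝ :=
  Real.exp (∑ j, θ j * φ s j) / ∑ s', Real.exp (∑ j, θ j * φ s' j)

/-- For an exponential family on a finite set with sufficient statistics bounded
by 1 in sup-norm, `KL(P_θ ‖ P_{θ'}) ≤ 2 √m ‖θ − θ'‖₂`. -/
theorem gibbs_KL_bound {S : Type*} [Fintype S] [Nonempty S] {m : ℕ}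
    (φ : S → Fin m → ℝ) (hφ : ∀ s j, |φ s j| ≤ 1) (θ θ' : Fin m → ℝ) :
    klFin (gibbs φ θ) (gibbs φ θ') ≤
      ENNReal.ofReal (2 * Real.sqrt m * Real.sqrt (∑ j, (θ j - θ' j) ^ 2)) := by
  set c : ℝ := Real.sqrt m * Real.sqrt (∑ j, (θ j - θ' j) ^ 2) with hc
  have hcnn : 0 ≤ c := mul_nonneg (Real.sqrt_nonneg _) (Real.sqrt_nonneg _)
  have hb : ∀ s : S, |∑ j, (θ j - θ' j) * φ s j| ≤ c := by
    intro s
    calc |∑ j, (θ j - θ' j) * φ s j| ≤ ∑ j, |(θ j - θ' j) * φ s j| :=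
        Finset.abs_sum_le_sum_abs _ _
      _ ≤ ∑ j, |θ j - θ' j| * 1 := by
          refine Finset.sum_le_sum fun j _ => ?_
          rw [abs_mul]
          exact mul_le_mul_of_nonneg_left (hφ s j) (abs_nonneg _)
      _ = ∑ j, |θ j - θ' j| := by simp
      _ = Real.sqrt ((∑ j, |θ j - θ' j|) ^ 2) :=
          (Real.sqrt_sq (Finset.sum_nonneg fun j _ => abs_nonneg _)).symm
      _ ≤ Real.sqrt ((m : ℝ) * ∑ j, (θ j - θ' j) ^ 2) := by
          apply Real.sqrt_le_sqrt
          have h2 := sq_sum_le_card_mul_sum_sq (s := Finset.univ)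
            (f := fun j => |θ j - θ' j|)
          simpa [sq_abs] using h2
      _ = c := by rw [hc, Real.sqrt_mul (Nat.cast_nonneg m)]
  set Z : ℝ := ∑ s' : S, Real.exp (∑ j, θ j * φ s' j) with hZ
  set Z' : ℝ := ∑ s' : S, Real.exp (∑ j, θ' j * φ s' j) with hZ'
  have hZpos : 0 < Z := Finset.sum_pos (fun s _ => Real.exp_pos _) Finset.univ_nonempty
  have hZ'pos : 0 < Z' := Finset.sum_pos (fun s _ => Real.exp_pos _) Finset.univ_nonempty
  have hP : ∀ s, 0 < gibbs φ θ s := fun s => div_pos (Real.exp_pos _) hZpos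
  have hQ : ∀ s, 0 < gibbs φ θ' s := fun s => div_pos (Real.exp_pos _) hZ'pos
  have hsum1 : ∑ s, gibbs φ θ s = 1 := by
    rw [show (∑ s, gibbs φ θ s) = (∑ s, Real.exp (∑ j, θ j * φ s j)) / Z from
      (Finset.sum_div _ _ _).symm]
    exact div_self hZpos.ne'
  have hlog : ∀ s, Real.log (gibbs φ θ s / gibbs φ θ' s) =
      (∑ j, (θ j - θ' j) * φ s j) + (Real.log Z' - Real.log Z) := by
    intro s
    have hsub : (∑ j, (θ j - θ' j) * φ s j)
        = (∑ j, θ j * φ s j) - (∑ j, θ' j * φ s j) := by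
      rw [← Finset.sum_sub_distrib]
      exact Finset.sum_congr rfl fun j _ => by ring
    rw [Real.log_div (hP s).ne' (hQ s).ne']
    unfold gibbs
    rw [Real.log_div (Real.exp_pos _).ne' hZpos.ne',
        Real.log_div (Real.exp_pos _).ne' hZ'pos.ne',
        Real.log_exp, Real.log_exp, hsub]
    ring
  have hD : Real.log Z' - Real.log Z ≤ c := by
    have hZle : Z' ≤ Real.exp c * Z := by
      rw [hZ', hZ, Finset.mul_sum]
      refine Finset.sum_le_sum fun s _ => ?_
      rw [← Real.exp_add]
      apply Real.exp_le_exp.2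
      have := hb s
      have h2 : ∑ j, θ' j * φ s j - ∑ j, θ j * φ s j = -(∑ j, (θ j - θ' j) * φ s j) := by
        rw [← Finset.sum_sub_distrib, ← Finset.sum_neg_distrib]
        exact Finset.sum_congr rfl fun j _ => by ring
      nlinarith [abs_le.1 (hb s)]
    have h3 : Real.log Z' ≤ Real.log (Real.exp c * Z) :=
      Real.log_le_log hZ'pos hZle
    rw [Real.log_mul (Real.exp_pos _).ne' hZpos.ne', Real.log_exp] at h3
    linarith
  have hKL : klFin (gibbs φ θ) (gibbs φ θ') =
      ENNReal.ofReal (∑ s, gibbs φ θ s * Real.log (gibbs φ θ s / gibbs φ θ' s)) := by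
    rw [klFin, if_pos (fun a _ => hQ a)]
    congr 1
    exact Finset.sum_congr rfl fun s _ => if_pos (hP s)
  rw [hKL]
  apply ENNReal.ofReal_le_ofReal
  have key : ∑ s, gibbs φ θ s * Real.log (gibbs φ θ s / gibbs φ θ' s) ≤ 2 * c := by
    have expand : ∑ s, gibbs φ θ s * Real.log (gibbs φ θ s / gibbs φ θ' s)
        = (∑ s, gibbs φ θ s * (∑ j, (θ j - θ' j) * φ s j))
          + (Real.log Z' - Real.log Z) := by
      rw [show (Real.log Z' - Real.log Z)
          = (∑ s, gibbs φ θ s) * (Real.log Z' - Real.log Z) by rw [hsum1, one_mul]]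
      rw [Finset.sum_mul, ← Finset.sum_add_distrib]
      exact Finset.sum_congr rfl fun s _ => by rw [hlog s]; ring
    rw [expand]
    have h1 : (∑ s, gibbs φ θ s * (∑ j, (θ j - θ' j) * φ s j)) ≤ c := by
      calc (∑ s, gibbs φ θ s * (∑ j, (θ j - θ' j) * φ s j))
          ≤ ∑ s, gibbs φ θ s * c := by
            refine Finset.sum_le_sum fun s _ => ?_
            exact mul_le_mul_of_nonneg_left ((abs_le.1 (hb s)).2) (hP s).le
        _ = c := by rw [← Finset.sum_mul, hsum1, one_mul]
    linarith
  calc ∑ s, gibbs φ θ s * Real.log (gibbs φ θ s / gibbs φ θ' s) ≤ 2 * c := key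
    _ = 2 * Real.sqrt m * Real.sqrt (∑ j, (θ j - θ' j) ^ 2) := by rw [hc]; ring
end

section
/- Let X and Y be nonempty finite sets, and let D and P be probability mass functions on X × Y with the same marginal d on X, i.e., Σ_y D(x, y) = Σ_y P(x, y) = d(x) for all x ∈ X. Let f : X × Y → [0, 1]. Then | Σ_{x,y} f(x,y) D(x,y) − Σ_{x,y} f(x,y) P(x,y) | ≤ sqrt( 2 · Σ_{x : d(x) > 0} d(x) · KL( D(·|x) ‖ P(·|x) ) ), where D(y|x) = D(x,y)/d(x) and P(y|x) = P(x,y)/d(x) for d(x) > 0. -/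
open Finset

open Finset

lemma log_sum_ineq {ι : Type*} (s : Finset ι) (a b : ι → ℝ)
    (ha : ∀ i ∈ s, 0 ≤ a i) (hb : ∀ i ∈ s, 0 < b i) :
    (∑ i ∈ s, a i) * Real.log ((∑ i ∈ s, a i) / (∑ i ∈ s, b i)) ≤
      ∑ i ∈ s, a i * Real.log (a i / b i) := by
  rcases s.eq_empty_or_nonempty with hs | hs
  · simp [hs]
  set A := ∑ i ∈ s, a i with hA
  set B := ∑ i ∈ s, b i with hB
  have hBpos : 0 < B := Finset.sum_pos hb hs
  have hw : ∑ i ∈ s, b i / B = 1 := by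
    rw [← Finset.sum_div, div_self hBpos.ne']
  have hJ := Real.convexOn_mul_log.map_sum_le (t := s) (w := fun i => b i / B)
    (p := fun i => a i / b i)
    (fun i hi => div_nonneg (hb i hi).le hBpos.le) hw
    (fun i hi => Set.mem_Ici.mpr (div_nonneg (ha i hi) (hb i hi).le))
  have e1 : ∑ i ∈ s, (b i / B) • (a i / b i) = A / B := by
    have h : ∀ i ∈ s, (b i / B) • (a i / b i) = a i / B := by
      intro i hi
      have h1 : b i ≠ 0 := (hb i hi).ne'
      have h2 : B ≠ 0 := hBpos.ne'
      rw [smul_eq_mul]; field_simp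
    rw [Finset.sum_congr rfl h, ← Finset.sum_div, hA]
  have e2 : ∑ i ∈ s, (b i / B) • ((a i / b i) * Real.log (a i / b i)) =
      (∑ i ∈ s, a i * Real.log (a i / b i)) / B := by
    rw [Finset.sum_div]
    refine Finset.sum_congr rfl fun i hi => ?_
    have h1 : b i ≠ 0 := (hb i hi).ne'
    have h2 : B ≠ 0 := hBpos.ne'
    rw [smul_eq_mul]
    field_simp
  rw [e1, e2] at hJ
  have := mul_le_mul_of_nonneg_right hJ hBpos.le
  rw [div_mul_cancel₀ _ hBpos.ne'] at this
  calc A * Real.log (A / B) = A / B * Real.log (A / B) * B := by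
        field_simp
    _ ≤ _ := this

lemma neg_log_pinsker {b : ℝ} (hb0 : 0 < b) (hb1 : b ≤ 1) :
    2 * (1 - b) ^ 2 ≤ -Real.log b := by
  set g : ℝ → ℝ := fun t => -Real.log t - 2 * (1 - t) ^ 2 with hg
  have hderiv : ∀ t ∈ Set.Icc b 1, HasDerivAt g (-(1/t) + 4 * (1 - t)) t := by
    intro t ht
    have ht0 : 0 < t := lt_of_lt_of_le hb0 ht.1
    have h1 : HasDerivAt (fun t : ℝ => -Real.log t) (-(1/t)) t :=
      ((Real.hasDerivAt_log ht0.ne').neg).congr_deriv (by rw [one_div])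
    have h2 : HasDerivAt (fun t : ℝ => 2 * (1 - t) ^ 2) (-4 * (1 - t)) t := by
      have hi : HasDerivAt (fun t : ℝ => 1 - t) (-1) t := (hasDerivAt_id t).const_sub 1
      have := (hi.pow 2).const_mul 2
      refine this.congr_deriv ?_
      ring
    have := h1.sub h2
    refine this.congr_deriv ?_
    ring
  have hanti : AntitoneOn g (Set.Icc b 1) := by
    apply antitoneOn_of_deriv_nonpos (convex_Icc b 1)
    · exact fun t ht => ((hderiv t ht).continuousAt).continuousWithinAt
    · intro t ht
      rw [interior_Icc] at ht
      exact ((hderiv t ⟨ht.1.le, ht.2.le⟩).differentiableAt).differentiableWithinAt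
    · intro t ht
      rw [interior_Icc] at ht
      rw [((hderiv t (Set.mem_Icc.mpr ⟨ht.1.le, ht.2.le⟩)).deriv)]
      have ht0 : 0 < t := lt_of_lt_of_le hb0 ht.1.le
      have key : -(1/t) + 4 * (1 - t) = -((2*t-1)^2/t) := by
        field_simp; ring
      rw [key]
      exact neg_nonpos_of_nonneg (div_nonneg (sq_nonneg _) ht0.le)
  have h := hanti (Set.mem_Icc.mpr ⟨le_refl b, hb1⟩) (Set.mem_Icc.mpr ⟨hb1, le_refl 1⟩) hb1
  simp only [hg, Real.log_one] at h
  nlinarith [h]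

lemma bin_pinsker {a b : ℝ} (hb : 0 < b) (hba : b < a) (ha : a ≤ 1) :
    2 * (a - b) ^ 2 ≤ a * Real.log (a / b) + (1 - a) * Real.log ((1 - a) / (1 - b)) := by
  have ha0 : 0 < a := hb.trans hba
  have hb1 : b < 1 := lt_of_lt_of_le hba ha
  rcases eq_or_lt_of_le ha with ha1 | ha1
  · -- a = 1
    subst ha1
    simp only [sub_self, zero_mul, add_zero, one_mul]
    rw [one_div, Real.log_inv]
    exact neg_log_pinsker hb hb1.le
  · -- a < 1
    set g : ℝ → ℝ := fun t =>
      a * (Real.log a - Real.log t) + (1 - a) * (Real.log (1 - a) - Real.log (1 - t))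
        - 2 * (a - t) ^ 2 with hg
    have hderiv : ∀ t ∈ Set.Icc b a, t ∈ Set.Ioo (0:ℝ) 1 →
        HasDerivAt g (-(a/t) + (1-a)/(1-t) + 4 * (a - t)) t := by
      intro t _ ht
      have h1 : HasDerivAt (fun t : ℝ => a * (Real.log a - Real.log t)) (-(a/t)) t := by
        have := ((Real.hasDerivAt_log ht.1.ne').const_sub (Real.log a)).const_mul a
        refine this.congr_deriv ?_
        field_simp
      have h2 : HasDerivAt (fun t : ℝ => (1-a) * (Real.log (1-a) - Real.log (1-t)))
          ((1-a)/(1-t)) t := by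
        have hi : HasDerivAt (fun t : ℝ => 1 - t) (-1) t := (hasDerivAt_id t).const_sub 1
        have hl : HasDerivAt (fun t : ℝ => Real.log (1 - t)) (-1 / (1-t)) t :=
          hi.log (by linarith [ht.2] : (1:ℝ) - t ≠ 0)
        have := (hl.const_sub (Real.log (1-a))).const_mul (1-a)
        refine this.congr_deriv ?_
        field_simp
      have h3 : HasDerivAt (fun t : ℝ => 2 * (a - t) ^ 2) (-4 * (a - t)) t := by
        have hi : HasDerivAt (fun t : ℝ => a - t) (-1) t := (hasDerivAt_id t).const_sub a
        have := (hi.pow 2).const_mul 2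
        refine this.congr_deriv ?_
        ring
      have := (h1.add h2).sub h3
      refine this.congr_deriv ?_
      ring
    have hsub : Set.Icc b a ⊆ Set.Ioo (0:ℝ) 1 := fun t ht =>
      ⟨lt_of_lt_of_le hb ht.1, lt_of_le_of_lt ht.2 ha1⟩
    have hanti : AntitoneOn g (Set.Icc b a) := by
      apply antitoneOn_of_deriv_nonpos (convex_Icc b a)
      · exact fun t ht => ((hderiv t ht (hsub ht)).continuousAt).continuousWithinAt
      · intro t ht
        rw [interior_Icc] at ht
        have ht' : t ∈ Set.Icc b a := ⟨ht.1.le, ht.2.le⟩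
        exact ((hderiv t ht' (hsub ht')).differentiableAt).differentiableWithinAt
      · intro t ht
        rw [interior_Icc] at ht
        have ht' : t ∈ Set.Icc b a := ⟨ht.1.le, ht.2.le⟩
        rw [(hderiv t ht' (hsub ht')).deriv]
        have ht0 : 0 < t := (hsub ht').1
        have ht1 : t < 1 := (hsub ht').2
        have e : -(a/t) + (1-a)/(1-t) + 4 * (a - t)
            = ((t - a) + 4 * (a - t) * (t * (1 - t))) / (t * (1 - t)) := by
          have h1 : t ≠ 0 := ht0.ne'
          have h2 : (1:ℝ) - t ≠ 0 := by linarith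
          field_simp
          ring
        rw [e]
        apply div_nonpos_of_nonpos_of_nonneg
        · nlinarith [sq_nonneg (2*t - 1), ht.2]
        · exact le_of_lt (mul_pos ht0 (by linarith))
    have h := hanti (Set.mem_Icc.mpr ⟨le_refl b, hba.le⟩)
      (Set.mem_Icc.mpr ⟨hba.le, le_refl a⟩) hba.le
    have hga : g a = 0 := by simp [hg]
    rw [hga] at h
    have e1 : Real.log (a / b) = Real.log a - Real.log b := Real.log_div ha0.ne' hb.ne'
    have e2 : Real.log ((1-a) / (1-b)) = Real.log (1-a) - Real.log (1-b) :=
      Real.log_div (by linarith) (by linarith)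
    rw [e1, e2]
    simpa [hg] using h

lemma gibbs_pt {p q : ℝ} (hp : 0 < p) (hq : 0 < q) : p - q ≤ p * Real.log (p / q) := by
  have h := Real.log_le_sub_one_of_pos (div_pos hq hp)
  have hlog : Real.log (p / q) = -Real.log (q / p) := by
    rw [← Real.log_inv, inv_div]
  have e : q / p * p = q := div_mul_cancel₀ q hp.ne'
  rw [hlog]
  nlinarith [h, hp, e]

lemma klReal_nonneg {α : Type*} [Fintype α] (p q : α → ℝ)
    (hp : ∀ a, 0 ≤ p a) (hq : ∀ a, 0 ≤ q a)
    (hsum : ∑ a, q a ≤ ∑ a, p a) (hac : ∀ a, 0 < p a → 0 < q a) :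
    0 ≤ ∑ a, if 0 < p a then p a * Real.log (p a / q a) else 0 := by
  have h1 : ∑ a, (if 0 < p a then p a - q a else 0) ≤
      ∑ a, (if 0 < p a then p a * Real.log (p a / q a) else 0) := by
    refine Finset.sum_le_sum fun a _ => ?_
    by_cases h : 0 < p a
    · simp only [if_pos h]
      exact gibbs_pt h (hac a h)
    · simp [h]
  refine le_trans ?_ h1
  have e1 : ∑ a, (if 0 < p a then p a - q a else 0) =
      (∑ a ∈ univ.filter (fun a => 0 < p a), p a) -
        ∑ a ∈ univ.filter (fun a => 0 < p a), q a := by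
    rw [← Finset.sum_sub_distrib, Finset.sum_filter]
  have e2 : ∑ a ∈ univ.filter (fun a => 0 < p a), p a = ∑ a, p a := by
    refine Finset.sum_subset (filter_subset _ _) fun a _ ha => ?_
    simp only [mem_filter, mem_univ, true_and] at ha
    exact le_antisymm (not_lt.mp ha) (hp a)
  have e3 : ∑ a ∈ univ.filter (fun a => 0 < p a), q a ≤ ∑ a, q a :=
    Finset.sum_le_sum_of_subset_of_nonneg (filter_subset _ _) fun a _ _ => hq a
  rw [e1, e2]
  linarith

lemma fin_pinsker {α : Type*} [Fintype α] (p q : α → ℝ)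
    (hp : ∀ a, 0 ≤ p a) (hq : ∀ a, 0 ≤ q a)
    (hps : ∑ a, p a = 1) (hqs : ∑ a, q a = 1)
    (hac : ∀ a, 0 < p a → 0 < q a) :
    (∑ a, |p a - q a|) ^ 2 ≤ 2 * ∑ a, (if 0 < p a then p a * Real.log (p a / q a) else 0) := by
  classical
  set A : Finset α := univ.filter (fun i => q i < p i) with hA
  rcases A.eq_empty_or_nonempty with hAe | hAne
  · -- p = q everywhere
    have hle : ∀ i, p i ≤ q i := by
      intro i
      by_contra h
      have : i ∈ A := by simp [hA, not_le.mp h]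
      simp [hAe] at this
    have hzero : ∑ i, (q i - p i) = 0 := by
      rw [Finset.sum_sub_distrib, hps, hqs, sub_self]
    have hpq : ∀ i, p i = q i := by
      intro i
      have := (Finset.sum_eq_zero_iff_of_nonneg
        (fun i _ => sub_nonneg.mpr (hle i))).mp hzero i (mem_univ i)
      linarith
    have h1 : ∑ a, |p a - q a| = 0 :=
      Finset.sum_eq_zero fun a _ => by rw [hpq a, sub_self, abs_zero]
    have h2 : ∑ a, (if 0 < p a then p a * Real.log (p a / q a) else 0) = 0 := by
      refine Finset.sum_eq_zero fun a _ => ?_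
      by_cases h : 0 < p a
      · rw [if_pos h, ← hpq a, div_self h.ne', Real.log_one, mul_zero]
      · rw [if_neg h]
    rw [h1, h2]
    norm_num
  · set a := ∑ i ∈ A, p i with ha
    set b := ∑ i ∈ A, q i with hb
    have hpA : ∀ i ∈ A, q i < p i := fun i hi => (mem_filter.mp hi).2
    have hppos : ∀ i ∈ A, 0 < p i := fun i hi => lt_of_le_of_lt (hq i) (hpA i hi)
    have hbpos : 0 < b := Finset.sum_pos (fun i hi => hac i (hppos i hi)) hAne
    have hba : b < a := Finset.sum_lt_sum_of_nonempty hAne hpA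
    have ha1 : a ≤ 1 := by
      rw [← hps]
      exact Finset.sum_le_sum_of_subset_of_nonneg (subset_univ _) fun i _ _ => hp i
    -- L1 norm = 2 (a - b)
    have hAc : ∑ i ∈ univ.filter (fun i => ¬ q i < p i), p i = 1 - a := by
      have := Finset.sum_filter_add_sum_filter_not univ (fun i => q i < p i) p
      rw [hps] at this
      linarith [this]
    have hBc : ∑ i ∈ univ.filter (fun i => ¬ q i < p i), q i = 1 - b := by
      have := Finset.sum_filter_add_sum_filter_not univ (fun i => q i < p i) q
      rw [hqs] at this
      linarith [this]
    have hL1 : ∑ i, |p i - q i| = 2 * (a - b) := by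
      rw [← Finset.sum_filter_add_sum_filter_not univ (fun i => q i < p i) (fun i => |p i - q i|)]
      have e1 : ∑ i ∈ A, |p i - q i| = a - b := by
        rw [ha, hb, ← Finset.sum_sub_distrib]
        exact Finset.sum_congr rfl fun i hi => abs_of_pos (sub_pos.mpr (hpA i hi))
      have e2 : ∑ i ∈ univ.filter (fun i => ¬ q i < p i), |p i - q i|
          = (1 - b) - (1 - a) := by
        rw [← hAc, ← hBc, ← Finset.sum_sub_distrib]
        refine Finset.sum_congr rfl fun i hi => ?_
        have : p i ≤ q i := not_lt.mp (mem_filter.mp hi).2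
        rw [abs_of_nonpos (by linarith)]
        ring
      rw [e1, e2]
      ring
    -- KL lower bound on A
    have hA1 : a * Real.log (a / b) ≤ ∑ i ∈ A, p i * Real.log (p i / q i) :=
      log_sum_ineq A p q (fun i hi => (hppos i hi).le)
        (fun i hi => hac i (hppos i hi))
    have hsplitA : ∑ i ∈ A, (if 0 < p i then p i * Real.log (p i / q i) else 0)
        = ∑ i ∈ A, p i * Real.log (p i / q i) :=
      Finset.sum_congr rfl fun i hi => if_pos (hppos i hi)
    -- KL lower bound on complement
    set B : Finset α := (univ.filter (fun i => ¬ q i < p i)).filter (fun i => 0 < p i) with hB'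
    have hsplitB : ∑ i ∈ univ.filter (fun i => ¬ q i < p i),
        (if 0 < p i then p i * Real.log (p i / q i) else 0)
        = ∑ i ∈ B, p i * Real.log (p i / q i) := by
      rw [hB']
      exact (Finset.sum_filter _ _).symm
    have hpB : ∑ i ∈ B, p i = 1 - a := by
      rw [← hAc]
      refine Finset.sum_subset (filter_subset _ _) fun i h2 hi => ?_
      have hnp : ¬ 0 < p i := fun h => hi (mem_filter.mpr ⟨h2, h⟩)
      exact le_antisymm (not_lt.mp hnp) (hp i)
    have hqB : ∑ i ∈ B, q i ≤ 1 - b := by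
      rw [← hBc]
      exact Finset.sum_le_sum_of_subset_of_nonneg (filter_subset _ _) fun i _ _ => hq i
    have hBlow : (1 - a) * Real.log ((1 - a) / (1 - b)) ≤
        ∑ i ∈ B, p i * Real.log (p i / q i) := by
      rcases eq_or_lt_of_le ha1 with haa | haa
      · -- a = 1 : B empty
        have hBe : B = ∅ := by
          by_contra h
          have hne := Finset.nonempty_of_ne_empty h
          have : (0:ℝ) < ∑ i ∈ B, p i :=
            Finset.sum_pos (fun i hi => by simp only [hB', mem_filter] at hi; exact hi.2) hne
          rw [hpB, ← haa] at this
          norm_num at this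
        rw [hBe]
        simp [← haa]
      · -- a < 1
        have h1a : 0 < 1 - a := by linarith
        have hBne : B.Nonempty := by
          by_contra h
          rw [Finset.not_nonempty_iff_eq_empty] at h
          rw [h] at hpB
          simp at hpB
          linarith
        have hqBpos : 0 < ∑ i ∈ B, q i := by
          refine Finset.sum_pos (fun i hi => ?_) hBne
          simp only [hB', mem_filter] at hi
          exact hac i hi.2
        have hls := log_sum_ineq B p q
          (fun i hi => hp i) (fun i hi => by
            simp only [hB', mem_filter] at hi; exact hac i hi.2)
        rw [hpB] at hls
        refine le_trans ?_ hls
        apply mul_le_mul_of_nonneg_left _ h1a.le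
        apply Real.log_le_log (div_pos h1a (by linarith))
        exact div_le_div_of_nonneg_left h1a.le hqBpos hqB
    -- combine
    have hKL : a * Real.log (a / b) + (1 - a) * Real.log ((1 - a) / (1 - b)) ≤
        ∑ i, (if 0 < p i then p i * Real.log (p i / q i) else 0) := by
      rw [← Finset.sum_filter_add_sum_filter_not univ (fun i => q i < p i)
        (fun i => if 0 < p i then p i * Real.log (p i / q i) else 0)]
      rw [hsplitA, hsplitB]
      exact add_le_add hA1 hBlow
    have hbp := bin_pinsker hbpos hba ha1
    rw [hL1]
    nlinarith [hbp, hKL]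

/-- Model-misspecification bound: if `D` and `P` are joint pmfs on `X × Y` with the
same `X`-marginal `d`, and `f` takes values in `[0,1]`, then the difference of the
expectations of `f` is at most `√(2 · KL(D(·|X) ‖ P(·|X)))`, the conditional KL
divergence weighted by `d`. -/
theorem misspecification_conditional_KL_bound
    {X Y : Type*} [Fintype X] [Fintype Y] [Nonempty X] [Nonempty Y]
    (D P : X → Y → ℝ) (d : X → ℝ)
    (hDnn : ∀ x y, 0 ≤ D x y) (hPnn : ∀ x y, 0 ≤ P x y)
    (hDsum : ∑ x, ∑ y, D x y = 1) (hPsum : ∑ x, ∑ y, P x y = 1)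
    (hDmarg : ∀ x, ∑ y, D x y = d x) (hPmarg : ∀ x, ∑ y, P x y = d x)
    (f : X → Y → ℝ) (hf : ∀ x y, f x y ∈ Set.Icc (0 : ℝ) 1) :
    ENNReal.ofReal |(∑ x, ∑ y, f x y * D x y) - ∑ x, ∑ y, f x y * P x y| ≤
      (2 * ∑ x, ENNReal.ofReal (d x) *
          klFin (fun y => D x y / d x) (fun y => P x y / d x)) ^ (1 / 2 : ℝ) := by
  classical
  by_cases hAC : ∀ x y, 0 < D x y → 0 < P x y
  swap
  · -- absolute continuity fails: the right-hand side is `⊤`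
    push_neg at hAC
    obtain ⟨x, y, hDxy, hPxy⟩ := hAC
    have hP0 : P x y = 0 := le_antisymm hPxy (hPnn x y)
    have hdx : 0 < d x := by
      rw [← hDmarg x]
      exact lt_of_lt_of_le hDxy (Finset.single_le_sum (fun y _ => hDnn x y) (mem_univ y))
    have hkl : klFin (fun y => D x y / d x) (fun y => P x y / d x) = ⊤ := by
      have hneg : ¬ ∀ a, 0 < D x a / d x → 0 < P x a / d x := by
        push_neg
        exact ⟨y, div_pos hDxy hdx, by rw [hP0, zero_div]⟩
      simp only [klFin, if_neg hneg]
    have hterm : ENNReal.ofReal (d x) *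
        klFin (fun y => D x y / d x) (fun y => P x y / d x) = ⊤ := by
      rw [hkl, ENNReal.mul_top]
      rw [Ne, ENNReal.ofReal_eq_zero]
      exact not_le.mpr hdx
    have hsum : (∑ x, ENNReal.ofReal (d x) *
        klFin (fun y => D x y / d x) (fun y => P x y / d x)) = ⊤ :=
      ENNReal.sum_eq_top.mpr ⟨x, mem_univ x, hterm⟩
    rw [hsum, ENNReal.mul_top (by norm_num), ENNReal.top_rpow_of_pos (by norm_num)]
    exact le_top
  · have hdnn : ∀ x, 0 ≤ d x := fun x =>
      (hDmarg x) ▸ Finset.sum_nonneg fun y _ => hDnn x y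
    set k : X → ℝ := fun x => ∑ y, if 0 < D x y then D x y * Real.log (D x y / P x y) else 0
      with hk
    have hknn : ∀ x, 0 ≤ k x := by
      intro x
      rw [hk]
      refine klReal_nonneg (D x) (P x) (hDnn x) (hPnn x) ?_ (fun y => hAC x y)
      rw [hDmarg x, hPmarg x]
    have step1 : ∀ x, ENNReal.ofReal (d x) *
        klFin (fun y => D x y / d x) (fun y => P x y / d x) = ENNReal.ofReal (k x) := by
      intro x
      rcases eq_or_lt_of_le (hdnn x) with h0 | hdx
      · have hD0 : ∀ y, D x y = 0 := by
          intro y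
          have hs : ∑ y, D x y = 0 := by rw [hDmarg x, ← h0]
          exact (Finset.sum_eq_zero_iff_of_nonneg (fun y _ => hDnn x y)).mp hs y (mem_univ y)
        have hk0 : k x = 0 := by
          rw [hk]
          exact Finset.sum_eq_zero fun y _ => by simp [hD0 y]
        rw [hk0, ← h0]
        simp
      · have hcond : ∀ y, 0 < D x y / d x → 0 < P x y / d x := by
          intro y h
          have hD : 0 < D x y := by
            have := mul_pos h hdx
            rwa [div_mul_cancel₀ _ hdx.ne'] at this
          exact div_pos (hAC x y hD) hdx
        have hsum_eq : (∑ y, if 0 < D x y / d x then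
            D x y / d x * Real.log (D x y / d x / (P x y / d x)) else 0) = k x / d x := by
          rw [hk]
          rw [Finset.sum_div]
          refine Finset.sum_congr rfl fun y _ => ?_
          by_cases hD : 0 < D x y
          · have hP := hAC x y hD
            have harg : D x y / d x / (P x y / d x) = D x y / P x y := by
              have h1 : d x ≠ 0 := hdx.ne'
              have h2 : P x y ≠ 0 := hP.ne'
              field_simp
            rw [if_pos (div_pos hD hdx), if_pos hD, harg, div_mul_eq_mul_div]
          · have hnd : ¬ 0 < D x y / d x := by
              intro h
              refine hD ?_
              have := mul_pos h hdx
              rwa [div_mul_cancel₀ _ hdx.ne'] at this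
            rw [if_neg hnd, if_neg hD, zero_div]
        simp only [klFin, if_pos hcond]
        rw [hsum_eq, ← ENNReal.ofReal_mul (hdnn x), mul_div_cancel₀ _ hdx.ne']
    have hRHS : (2 * ∑ x, ENNReal.ofReal (d x) *
        klFin (fun y => D x y / d x) (fun y => P x y / d x))
        = ENNReal.ofReal (2 * ∑ x, k x) := by
      rw [Finset.sum_congr rfl fun x _ => step1 x,
        ← ENNReal.ofReal_sum_of_nonneg (fun x _ => hknn x),
        ENNReal.ofReal_mul (by norm_num : (0:ℝ) ≤ 2)]
      norm_num
    have hpins := fin_pinsker (fun z : X × Y => D z.1 z.2) (fun z : X × Y => P z.1 z.2)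
      (fun z => hDnn z.1 z.2) (fun z => hPnn z.1 z.2)
      (by rw [Fintype.sum_prod_type]; exact hDsum)
      (by rw [Fintype.sum_prod_type]; exact hPsum)
      (fun z => hAC z.1 z.2)
    have hK : (∑ x, ∑ y, |D x y - P x y|) ^ 2 ≤ 2 * ∑ x, k x := by
      rw [Fintype.sum_prod_type, Fintype.sum_prod_type] at hpins
      rw [hk]
      exact hpins
    have habs : ∀ x y, |f x y| ≤ 1 := fun x y =>
      abs_le.mpr ⟨by linarith [(hf x y).1], (hf x y).2⟩
    have hdiff : |(∑ x, ∑ y, f x y * D x y) - ∑ x, ∑ y, f x y * P x y| ≤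
        ∑ x, ∑ y, |D x y - P x y| := by
      have e : (∑ x, ∑ y, f x y * D x y) - ∑ x, ∑ y, f x y * P x y
          = ∑ x, ∑ y, f x y * (D x y - P x y) := by
        rw [← Finset.sum_sub_distrib]
        refine Finset.sum_congr rfl fun x _ => ?_
        rw [← Finset.sum_sub_distrib]
        exact Finset.sum_congr rfl fun y _ => (mul_sub _ _ _).symm
      rw [e]
      calc |∑ x, ∑ y, f x y * (D x y - P x y)| ≤ ∑ x, |∑ y, f x y * (D x y - P x y)| :=
            Finset.abs_sum_le_sum_abs _ _
        _ ≤ ∑ x, ∑ y, |f x y * (D x y - P x y)| :=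
            Finset.sum_le_sum fun x _ => Finset.abs_sum_le_sum_abs _ _
        _ ≤ ∑ x, ∑ y, |D x y - P x y| := by
            refine Finset.sum_le_sum fun x _ => Finset.sum_le_sum fun y _ => ?_
            rw [abs_mul]
            calc |f x y| * |D x y - P x y| ≤ 1 * |D x y - P x y| :=
                  mul_le_mul_of_nonneg_right (habs x y) (abs_nonneg _)
              _ = _ := one_mul _
    have hKnn : 0 ≤ 2 * ∑ x, k x :=
      mul_nonneg (by norm_num) (Finset.sum_nonneg fun x _ => hknn x)
    have hreal : |(∑ x, ∑ y, f x y * D x y) - ∑ x, ∑ y, f x y * P x y| ≤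
        Real.sqrt (2 * ∑ x, k x) := by
      refine hdiff.trans ?_
      have h := Real.sqrt_le_sqrt hK
      rwa [Real.sqrt_sq_eq_abs, abs_of_nonneg
        (Finset.sum_nonneg fun x _ => Finset.sum_nonneg fun y _ => abs_nonneg _)] at h
    calc ENNReal.ofReal |(∑ x, ∑ y, f x y * D x y) - ∑ x, ∑ y, f x y * P x y|
        ≤ ENNReal.ofReal (Real.sqrt (2 * ∑ x, k x)) := ENNReal.ofReal_le_ofReal hreal
      _ = ENNReal.ofReal ((2 * ∑ x, k x) ^ (1/2 : ℝ)) := by rw [Real.sqrt_eq_rpow]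
      _ = (ENNReal.ofReal (2 * ∑ x, k x)) ^ (1/2 : ℝ) :=
          (ENNReal.ofReal_rpow_of_nonneg hKnn (by norm_num)).symm
      _ = _ := by rw [← hRHS]
end
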